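/- There is a computable map assigning to each Minsky machine M (with states Q0, …, Qn, initial state Q0 and final state Q_F) a μStipula^I contract I_M whose set of states includes the states of M, together with, for every machine state Q and v1, v2 ∈ ℕ, a multiset ⟦v1, v2⟧_Q of pending events consisting of v1 copies of the event 0 ≫ dec1 ⇒ ackdec1, v2 copies of the event 0 ≫ dec2 ⇒ ackdec2, and one event 0 ≫ aQ ⇒ bQ, such that: (0) the initial configuration of I_M can reach via →* the configuration I_M(Q0, −, ⟦0, 0⟧_{Q0}); (1) if (Q_i, v1, v2) →_M (Q_j, v1', v2') then I_M(Q_i, −, ⟦v1, v2⟧_{Q_i}) →* I_M(Q_j, −, ⟦v1', v2'⟧_{Q_j}); (2) whenever I_M(Q_i, −, ⟦v1, v2⟧_{Q_i}) →* I_M(S, Σ, Ψ) → I_M(Q_j, Σ', Ψ') with S ∉ {Q0, …, Qn} and Q_j ∈ {Q0, …, Qn}, then Σ' = − and Ψ' = ⟦v1', v2'⟧_{Q_j} for some v1', v2' with (Q_i, v1, v2) →_M* (Q_j, v1', v2'). Consequently, M halts if and only if the state Q_F is reachable in I_M. -/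

import Mathlib

namespace MicroStipula

/-- A pending event (the same shape is used for event declarations occurring in
function bodies): `time ≫_line src ⇒ tgt`.  For a declaration, `time` is the delay `k`
of the time expression `now + k`. -/
structure Ev where
  time : ℕ
  line : ℕ
  src  : ℕ
  tgt  : ℕ
  deriving DecidableEq

/-- A function declaration `@src name { body } ⇒ @tgt`. -/
structure FunDecl where
  src  : ℕ
  name : ℕ
  body : List Ev
  tgt  : ℕ
  deriving DecidableEq

/-- A μStipula contract: a finite set of states, an initial state and
a finite set of functions. -/
structure Contract where
  states : List ℕ
  init   : ℕ
  funs   : List FunDecl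
  deriving DecidableEq

/-- The `Σ` component of a configuration: either `−` or a continuation `Ψ ⇒ Q`. -/
inductive Sig where
  | none : Sig
  | cont : Multiset Ev → ℕ → Sig
  deriving DecidableEq

/-- A configuration `⟨C(Q, Σ, Ψ), t⟩`. -/
structure Config where
  state   : ℕ
  sig     : Sig
  pending : Multiset Ev
  time    : ℕ
  deriving DecidableEq

/-- `nored(Ψ, Q)`: `Ψ` contains no event of the form `0 ≫_n Q ⇒ Q'`. -/
def nored (Ψ : Multiset Ev) (Q : ℕ) : Prop :=
  ∀ e ∈ Ψ, e.time = 0 → e.src ≠ Q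

/-- `Ψ↓`: remove the events with time value `0` and decrease all other time values by one. -/
def tickDown (Ψ : Multiset Ev) : Multiset Ev :=
  (Ψ.filter fun e => e.time ≠ 0).map fun e => ⟨e.time - 1, e.line, e.src, e.tgt⟩

/-- The multiset of pending events generated by a function body
(the place-holder `now` is dropped: `now + k` becomes the value `k`). -/
def bodyEvents (W : List Ev) : Multiset Ev := (W : Multiset Ev)

/-- `InitEv C`: the set of initial states of the events of `C`. -/
def InitEv (C : Contract) : Set ℕ :=
  {Q | ∃ f ∈ C.funs, ∃ e ∈ f.body, e.src = Q}

/-- The transition relation `→` of μStipula. -/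
inductive Step (C : Contract) : Config → Config → Prop
  | func {Ψ : Multiset Ev} {t : ℕ} (f : FunDecl) (hf : f ∈ C.funs)
      (hn : nored Ψ f.src) :
      Step C ⟨f.src, Sig.none, Ψ, t⟩ ⟨f.src, Sig.cont (bodyEvents f.body) f.tgt, Ψ, t⟩
  | stateChange {Q Q' : ℕ} {Ψ' Ψ : Multiset Ev} {t : ℕ} :
      Step C ⟨Q, Sig.cont Ψ' Q', Ψ, t⟩ ⟨Q', Sig.none, Ψ' + Ψ, t⟩
  | eventMatch {Q : ℕ} {Ψ : Multiset Ev} {t : ℕ} (e : Ev)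
      (he : e ∈ Ψ) (h0 : e.time = 0) (hs : e.src = Q) :
      Step C ⟨Q, Sig.none, Ψ, t⟩ ⟨Q, Sig.cont 0 e.tgt, Ψ.erase e, t⟩
  | tick {Q : ℕ} {Ψ : Multiset Ev} {t : ℕ} (hn : nored Ψ Q) :
      Step C ⟨Q, Sig.none, Ψ, t⟩ ⟨Q, Sig.none, tickDown Ψ, t + 1⟩

/-- The transition relation `→_tp` of μStipula^DI+ (rule (Tick) replaced by (Tick-Plus)). -/
inductive StepTP (C : Contract) : Config → Config → Prop
  | func {Ψ : Multiset Ev} {t : ℕ} (f : FunDecl) (hf : f ∈ C.funs)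
      (hn : nored Ψ f.src) :
      StepTP C ⟨f.src, Sig.none, Ψ, t⟩ ⟨f.src, Sig.cont (bodyEvents f.body) f.tgt, Ψ, t⟩
  | stateChange {Q Q' : ℕ} {Ψ' Ψ : Multiset Ev} {t : ℕ} :
      StepTP C ⟨Q, Sig.cont Ψ' Q', Ψ, t⟩ ⟨Q', Sig.none, Ψ' + Ψ, t⟩
  | eventMatch {Q : ℕ} {Ψ : Multiset Ev} {t : ℕ} (e : Ev)
      (he : e ∈ Ψ) (h0 : e.time = 0) (hs : e.src = Q) :
      StepTP C ⟨Q, Sig.none, Ψ, t⟩ ⟨Q, Sig.cont 0 e.tgt, Ψ.erase e, t⟩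
  | tickPlus {Q : ℕ} {Ψ : Multiset Ev} {t : ℕ} (hn : Q ∉ InitEv C) :
      StepTP C ⟨Q, Sig.none, Ψ, t⟩ ⟨Q, Sig.none, tickDown Ψ, t + 1⟩

/-- State reachability (w.r.t. `→`): some configuration `⟨C(Q, −, Ψ), t'⟩` is reachable
from the initial configuration `⟨C(Q_init, −, −), t⟩`. -/
def Reachable (C : Contract) (Q : ℕ) : Prop :=
  ∃ t t' Ψ, Relation.ReflTransGen (Step C)
    ⟨C.init, Sig.none, 0, t⟩ ⟨Q, Sig.none, Ψ, t'⟩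

/-- State reachability w.r.t. `→_tp`. -/
def ReachableTP (C : Contract) (Q : ℕ) : Prop :=
  ∃ t t' Ψ, Relation.ReflTransGen (StepTP C)
    ⟨C.init, Sig.none, 0, t⟩ ⟨Q, Sig.none, Ψ, t'⟩

/-- Well-formedness: every state mentioned in the contract belongs to its set of states. -/
def Contract.WF (C : Contract) : Prop :=
  C.init ∈ C.states ∧ ∀ f ∈ C.funs, f.src ∈ C.states ∧ f.tgt ∈ C.states ∧
    ∀ e ∈ f.body, e.src ∈ C.states ∧ e.tgt ∈ C.states

/-- μStipula^I : every time expression is `now + 0`. -/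
def Instantaneous (C : Contract) : Prop := ∀ f ∈ C.funs, ∀ e ∈ f.body, e.time = 0

/-- μStipula^TA : every time expression is `now + k` with `k > 0`. -/
def TimeAhead (C : Contract) : Prop := ∀ f ∈ C.funs, ∀ e ∈ f.body, 0 < e.time

/-- μStipula^D : no state is both the initial state of a function and of an event. -/
def Determinate (C : Contract) : Prop := ∀ f ∈ C.funs, f.src ∉ InitEv C

/-- μStipula^DI. -/
def DetInst (C : Contract) : Prop := Determinate C ∧ Instantaneous C

/-- A pending event of the contract `C`: it stems from an event declaration of `C`,
with a (possibly) decreased time value. -/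
def EvOf (C : Contract) (e : Ev) : Prop :=
  ∃ f ∈ C.funs, ∃ d ∈ f.body,
    e.line = d.line ∧ e.src = d.src ∧ e.tgt = d.tgt ∧ e.time ≤ d.time

/-- The possible `Σ` components of configurations of `C`. -/
inductive SigOf (C : Contract) : Sig → Prop
  | none : SigOf C Sig.none
  | func (f : FunDecl) (hf : f ∈ C.funs) : SigOf C (Sig.cont (bodyEvents f.body) f.tgt)
  | event (Q : ℕ) (hQ : Q ∈ C.states) : SigOf C (Sig.cont 0 Q)

/-- Configurations of a contract `C` (the set `𝒞_C`). -/
def ConfigOf (C : Contract) (c : Config) : Prop :=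
  c.state ∈ C.states ∧ SigOf C c.sig ∧ ∀ e ∈ c.pending, EvOf C e

/-- The quasi-ordering `⪯` on configurations: same state, same `Σ`, multiset inclusion
of the pending events; the time component is disregarded. -/
def ConfigLe (c c' : Config) : Prop :=
  c.state = c'.state ∧ c.sig = c'.sig ∧ c.pending ≤ c'.pending

/-- The (unique) shape of a (Tick) transition out of a configuration. -/
def IsTickStep (c c' : Config) : Prop :=
  c.sig = Sig.none ∧ c' = ⟨c.state, Sig.none, tickDown c.pending, c.time + 1⟩

/-- A configuration is stuck if every computation starting from it consists only of
instances of rule (Tick). -/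
def Stuck (C : Contract) (c : Config) : Prop :=
  ∀ c₁ c₂, Relation.ReflTransGen (Step C) c c₁ → Step C c₁ c₂ → IsTickStep c₁ c₂

/-- A well-quasi-ordering: every infinite sequence contains an increasing pair. -/
def IsWQO {α : Type*} (r : α → α → Prop) : Prop :=
  ∀ f : ℕ → α, ∃ i j, i < j ∧ r (f i) (f j)

/-- Upward compatibility of an ordering with a transition relation. -/
def UpwardCompatible {α : Type*} (step le : α → α → Prop) : Prop :=
  ∀ c₁ c₁' c₂, le c₁ c₁' → step c₁ c₂ →
    ∃ c₂', Relation.ReflTransGen step c₁' c₂' ∧ le c₂ c₂'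

/-- Well-structured transition system. -/
def IsWSTS {α : Type*} (step le : α → α → Prop) : Prop :=
  Reflexive le ∧ Transitive le ∧ IsWQO le ∧ UpwardCompatible step le

/-- `↑𝒟` within the configurations of `C`. -/
def upSet (C : Contract) (D : Set Config) : Set Config :=
  {c' | ConfigOf C c' ∧ ∃ c ∈ D, ConfigLe c c'}

/-- `Pred(𝒟)` w.r.t. `→_tp`, within the configurations of `C`. -/
def predTP (C : Contract) (D : Set Config) : Set Config :=
  {c | ConfigOf C c ∧ ∃ c' ∈ D, StepTP C c c'}

/-! ### Encodings -/

def Ev.equivProd : Ev ≃ ℕ × ℕ × ℕ × ℕ :=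
  ⟨fun e => (e.time, e.line, e.src, e.tgt), fun p => ⟨p.1, p.2.1, p.2.2.1, p.2.2.2⟩,
   fun _ => rfl, fun _ => rfl⟩

instance : Encodable Ev := Encodable.ofEquiv _ Ev.equivProd

def FunDecl.equivProd : FunDecl ≃ ℕ × ℕ × List Ev × ℕ :=
  ⟨fun f => (f.src, f.name, f.body, f.tgt), fun p => ⟨p.1, p.2.1, p.2.2.1, p.2.2.2⟩,
   fun _ => rfl, fun _ => rfl⟩

instance : Encodable FunDecl := Encodable.ofEquiv _ FunDecl.equivProd

def Contract.equivProd : Contract ≃ List ℕ × ℕ × List FunDecl :=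
  ⟨fun C => (C.states, C.init, C.funs), fun p => ⟨p.1, p.2.1, p.2.2⟩,
   fun _ => rfl, fun _ => rfl⟩

instance : Encodable Contract := Encodable.ofEquiv _ Contract.equivProd

def Sig.equivOption : Sig ≃ Option (Multiset Ev × ℕ) where
  toFun s := match s with | Sig.none => Option.none | Sig.cont m q => some (m, q)
  invFun o := match o with | Option.none => Sig.none | some (m, q) => Sig.cont m q
  left_inv s := by cases s <;> rfl
  right_inv o := by rcases o with _ | ⟨m, q⟩ <;> rfl

instance : Encodable Sig := Encodable.ofEquiv _ Sig.equivOption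

def Config.equivProd : Config ≃ ℕ × Sig × Multiset Ev × ℕ :=
  ⟨fun c => (c.state, c.sig, c.pending, c.time), fun p => ⟨p.1, p.2.1, p.2.2.1, p.2.2.2⟩,
   fun _ => rfl, fun _ => rfl⟩

instance : Encodable Config := Encodable.ofEquiv _ Config.equivProd

/-! ### Minsky machines -/

/-- A Minsky machine instruction (the register is `false` for `R₁`, `true` for `R₂`):
`inc r next` and `decjump r ifZero ifPos`. -/
inductive MInstr where
  | inc : Bool → ℕ → MInstr
  | decjump : Bool → ℕ → ℕ → MInstr
  deriving DecidableEq

/-- A Minsky machine. -/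
structure Minsky where
  states : List ℕ
  init   : ℕ
  final  : ℕ
  prog   : List (ℕ × MInstr)
  deriving DecidableEq

/-- Well-formed Minsky machine: the final state has no instruction. -/
def Minsky.WF (M : Minsky) : Prop :=
  M.init ∈ M.states ∧ M.final ∈ M.states ∧ (∀ i, (M.final, i) ∉ M.prog) ∧
  ∀ p ∈ M.prog, p.1 ∈ M.states ∧
    (match p.2 with
     | MInstr.inc _ q => q ∈ M.states
     | MInstr.decjump _ q q' => q ∈ M.states ∧ q' ∈ M.states)

/-- The transition relation of a Minsky machine on configurations `(Q, v₁, v₂)`. -/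
inductive MStep (M : Minsky) : ℕ × ℕ × ℕ → ℕ × ℕ × ℕ → Prop
  | inc₁ {Q Q' v₁ v₂} : (Q, MInstr.inc false Q') ∈ M.prog →
      MStep M (Q, v₁, v₂) (Q', v₁ + 1, v₂)
  | inc₂ {Q Q' v₁ v₂} : (Q, MInstr.inc true Q') ∈ M.prog →
      MStep M (Q, v₁, v₂) (Q', v₁, v₂ + 1)
  | jz₁ {Q Q' Q'' v₂} : (Q, MInstr.decjump false Q' Q'') ∈ M.prog →
      MStep M (Q, 0, v₂) (Q', 0, v₂)
  | dec₁ {Q Q' Q'' v₁ v₂} : (Q, MInstr.decjump false Q' Q'') ∈ M.prog →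
      MStep M (Q, v₁ + 1, v₂) (Q'', v₁, v₂)
  | jz₂ {Q Q' Q'' v₁} : (Q, MInstr.decjump true Q' Q'') ∈ M.prog →
      MStep M (Q, v₁, 0) (Q', v₁, 0)
  | dec₂ {Q Q' Q'' v₁ v₂} : (Q, MInstr.decjump true Q' Q'') ∈ M.prog →
      MStep M (Q, v₁, v₂ + 1) (Q'', v₁, v₂)

/-- The halting problem: the final state is reachable from `(Q₀, 0, 0)`. -/
def Minsky.Halts (M : Minsky) : Prop :=
  ∃ v₁ v₂, Relation.ReflTransGen (MStep M) (M.init, 0, 0) (M.final, v₁, v₂)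

def MInstr.equivSum : MInstr ≃ (Bool × ℕ) ⊕ (Bool × ℕ × ℕ) where
  toFun i := match i with
    | MInstr.inc r q => Sum.inl (r, q)
    | MInstr.decjump r q q' => Sum.inr (r, q, q')
  invFun s := match s with
    | Sum.inl (r, q) => MInstr.inc r q
    | Sum.inr (r, q, q') => MInstr.decjump r q q'
  left_inv i := by cases i <;> rfl
  right_inv s := by rcases s with ⟨r, q⟩ | ⟨r, q, q'⟩ <;> rfl

instance : Encodable MInstr := Encodable.ofEquiv _ MInstr.equivSum

def Minsky.equivProd : Minsky ≃ List ℕ × ℕ × ℕ × List (ℕ × MInstr) :=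
  ⟨fun M => (M.states, M.init, M.final, M.prog), fun p => ⟨p.1, p.2.1, p.2.2.1, p.2.2.2⟩,
   fun _ => rfl, fun _ => rfl⟩

instance : Encodable Minsky := Encodable.ofEquiv _ Minsky.equivProd

/-! ### Clauses -/

/-- A clause of a contract: either a function `⟨Q, f, Q'⟩` or an event `⟨Q, ev_n, Q'⟩`. -/
inductive Clause where
  | fn : ℕ → ℕ → ℕ → Clause
  | ev : ℕ → ℕ → ℕ → Clause
  deriving DecidableEq

/-- The clause belongs to the contract. -/
def ClauseOf (C : Contract) : Clause → Prop
  | Clause.fn Q g Q' => ∃ f ∈ C.funs, f.src = Q ∧ f.name = g ∧ f.tgt = Q'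
  | Clause.ev Q n Q' => ∃ f ∈ C.funs, ∃ e ∈ f.body, e.line = n ∧ e.src = Q ∧ e.tgt = Q'

/-- Some computation starting from the initial configuration of `C` contains a transition
executing the given clause: an instance of rule (Function) invoking the function, resp.
an instance of rule (Event-Match) firing the event. -/
def Executes (C : Contract) : Clause → Prop
  | Clause.fn Q g Q' => ∃ t t' Ψ, ∃ f ∈ C.funs,
      f.src = Q ∧ f.name = g ∧ f.tgt = Q' ∧ nored Ψ Q ∧
      Relation.ReflTransGen (Step C) ⟨C.init, Sig.none, 0, t⟩ ⟨Q, Sig.none, Ψ, t'⟩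
  | Clause.ev Q n Q' => ∃ t t' Ψ, ∃ e ∈ Ψ,
      e.time = 0 ∧ Ev.line e = n ∧ e.src = Q ∧ e.tgt = Q' ∧
      Relation.ReflTransGen (Step C) ⟨C.init, Sig.none, 0, t⟩ ⟨Q, Sig.none, Ψ, t'⟩

def Clause.equivSum : Clause ≃ (ℕ × ℕ × ℕ) ⊕ (ℕ × ℕ × ℕ) where
  toFun c := match c with
    | Clause.fn a b d => Sum.inl (a, b, d)
    | Clause.ev a b d => Sum.inr (a, b, d)
  invFun s := match s with
    | Sum.inl (a, b, d) => Clause.fn a b d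
    | Sum.inr (a, b, d) => Clause.ev a b d
  left_inv c := by cases c <;> rfl
  right_inv s := by rcases s with ⟨a, b, d⟩ | ⟨a, b, d⟩ <;> rfl

instance : Encodable Clause := Encodable.ofEquiv _ Clause.equivSum

/-- `⟦v₁, v₂⟧_Q`: the multiset made of `v₁` copies of a first event, `v₂` copies of a
second event, and one event depending on the machine state `Q`. -/
def msem (e₁ e₂ : Minsky → Ev) (e₃ : Minsky → ℕ → Ev) (M : Minsky)
    (Q v₁ v₂ : ℕ) : Multiset Ev :=
  Multiset.replicate v₁ (e₁ M) + Multiset.replicate v₂ (e₂ M) + {e₃ M Q}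



/-! ### Auxiliary: the encoding -/

namespace Enc

variable (M : Minsky)

/-- A bound strictly above every machine state. -/
def B : ℕ := M.states.sum + 1

def s0 : ℕ := B M
def w0 : ℕ := B M + 1
def decS (r : Bool) : ℕ := B M + 2 + cond r 1 0
def ackS (r : Bool) : ℕ := B M + 4 + cond r 1 0
def aSt (Q : ℕ) : ℕ := B M + 6 + 5 * Q
def bSt (Q : ℕ) : ℕ := B M + 7 + 5 * Q
def uSt (p : ℕ × MInstr) : ℕ := B M + 8 + 5 * Encodable.encode p
def wSt (p : ℕ × MInstr) : ℕ := B M + 9 + 5 * Encodable.encode p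

def cntE (r : Bool) : Ev := ⟨0, 0, decS M r, ackS M r⟩
def tokE (Q : ℕ) : Ev := ⟨0, 0, aSt M Q, bSt M Q⟩

/-- Target of the `h` (guard) event of instruction `p`. -/
def hT (p : ℕ × MInstr) : ℕ :=
  match p.2 with
  | .inc _ Q' => Q'
  | .decjump _ _ _ => wSt M p

def hEv (p : ℕ × MInstr) : Ev := ⟨0, 0, uSt M p, hT M p⟩

/-- The "finish" event of a decjump instruction (target `T` is `Q'` or `Q''`). -/
def finE (p : ℕ × MInstr) (T : ℕ) : Ev := ⟨0, 0, wSt M p, T⟩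

def initEv : Ev := ⟨0, 0, w0 M, M.init⟩

def FD (p : ℕ × MInstr) : FunDecl := ⟨p.1, 0, [hEv M p], aSt M p.1⟩

def funcsOf (p : ℕ × MInstr) : List FunDecl :=
  match h : p.2 with
  | .inc r Q' => [FD M p, ⟨bSt M p.1, 0, [cntE M r, tokE M Q'], uSt M p⟩]
  | .decjump r Q' Q'' =>
      [FD M p, ⟨bSt M p.1, 0, [], decS M r⟩,
       ⟨decS M r, 0, [finE M p Q', tokE M Q'], uSt M p⟩,
       ⟨ackS M r, 0, [finE M p Q'', tokE M Q''], uSt M p⟩]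

def initFun : FunDecl := ⟨s0 M, 0, [initEv M, tokE M M.init], w0 M⟩

def enc : Contract :=
  ⟨M.states ++ ([s0 M, w0 M, decS M false, decS M true, ackS M false, ackS M true]
      ++ M.states.flatMap (fun Q => [aSt M Q, bSt M Q])
      ++ M.prog.flatMap (fun p => [uSt M p, wSt M p])),
   s0 M, initFun M :: M.prog.flatMap (funcsOf M)⟩

/-- Counters part of the pending multiset. -/
def Kv (v₁ v₂ : ℕ) : Multiset Ev :=
  Multiset.replicate v₁ (cntE M false) + Multiset.replicate v₂ (cntE M true)

lemma lt_B_of_mem {q : ℕ} (h : q ∈ M.states) : q < B M := by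
  have := List.le_sum_of_mem h
  unfold B; omega

@[simp] lemma enc_init : (enc M).init = s0 M := rfl

lemma mem_enc_funs {f : FunDecl} :
    f ∈ (enc M).funs ↔ f = initFun M ∨ ∃ p ∈ M.prog, f ∈ funcsOf M p := by
  simp [enc, List.mem_flatMap]

/-- Membership in `funcsOf` unfolded. -/
lemma funcsOf_cases {p : ℕ × MInstr} {f : FunDecl} (h : f ∈ funcsOf M p) :
    f = FD M p ∨
    (∃ r Q', p.2 = .inc r Q' ∧ f = ⟨bSt M p.1, 0, [cntE M r, tokE M Q'], uSt M p⟩) ∨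
    (∃ r Q' Q'', p.2 = .decjump r Q' Q'' ∧
      (f = ⟨bSt M p.1, 0, [], decS M r⟩ ∨
       f = ⟨decS M r, 0, [finE M p Q', tokE M Q'], uSt M p⟩ ∨
       f = ⟨ackS M r, 0, [finE M p Q'', tokE M Q''], uSt M p⟩)) := by
  rcases p with ⟨Q, i⟩
  cases i with
  | inc r Q' =>
    simp only [funcsOf, List.mem_cons, List.mem_singleton, List.not_mem_nil] at h
    rcases h with h | h | h
    · exact Or.inl h
    · exact Or.inr (Or.inl ⟨r, Q', rfl, h⟩)
    · exact absurd h (by simp)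
  | decjump r Q' Q'' =>
    simp only [funcsOf, List.mem_cons, List.mem_singleton, List.not_mem_nil] at h
    rcases h with h | h | h | h | h
    · exact Or.inl h
    · exact Or.inr (Or.inr ⟨r, Q', Q'', rfl, Or.inl h⟩)
    · exact Or.inr (Or.inr ⟨r, Q', Q'', rfl, Or.inr (Or.inl h)⟩)
    · exact Or.inr (Or.inr ⟨r, Q', Q'', rfl, Or.inr (Or.inr h)⟩)
    · exact absurd h (by simp)

end Enc

namespace Enc

variable (M : Minsky)

lemma tickDown_zero {Ψ : Multiset Ev} (h : ∀ e ∈ Ψ, e.time = 0) : tickDown Ψ = 0 := by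
  unfold tickDown
  rw [Multiset.filter_eq_nil.2 (by intro e he; simpa using h e he)]
  rfl

lemma mem_Kv {e : Ev} {w₁ w₂ : ℕ} :
    e ∈ Kv M w₁ w₂ ↔ (w₁ ≠ 0 ∧ e = cntE M false) ∨ (w₂ ≠ 0 ∧ e = cntE M true) := by
  simp [Kv, Multiset.mem_replicate]

@[simp] lemma cnt_time (r : Bool) : (cntE M r).time = 0 := rfl
@[simp] lemma cnt_src (r : Bool) : (cntE M r).src = decS M r := rfl
@[simp] lemma cnt_tgt (r : Bool) : (cntE M r).tgt = ackS M r := rfl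
@[simp] lemma tok_time (Q : ℕ) : (tokE M Q).time = 0 := rfl
@[simp] lemma tok_src (Q : ℕ) : (tokE M Q).src = aSt M Q := rfl
@[simp] lemma tok_tgt (Q : ℕ) : (tokE M Q).tgt = bSt M Q := rfl
@[simp] lemma hEv_time (p : ℕ × MInstr) : (hEv M p).time = 0 := rfl
@[simp] lemma hEv_src (p : ℕ × MInstr) : (hEv M p).src = uSt M p := rfl
@[simp] lemma hEv_tgt (p : ℕ × MInstr) : (hEv M p).tgt = hT M p := rfl
@[simp] lemma finE_time (p : ℕ × MInstr) (T : ℕ) : (finE M p T).time = 0 := rfl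
@[simp] lemma finE_src (p : ℕ × MInstr) (T : ℕ) : (finE M p T).src = wSt M p := rfl
@[simp] lemma finE_tgt (p : ℕ × MInstr) (T : ℕ) : (finE M p T).tgt = T := rfl
@[simp] lemma initEv_time : (initEv M).time = 0 := rfl
@[simp] lemma initEv_src : (initEv M).src = w0 M := rfl
@[simp] lemma initEv_tgt : (initEv M).tgt = M.init := rfl

lemma uSt_inj {p q : ℕ × MInstr} (h : uSt M p = uSt M q) : p = q := by
  unfold uSt at h
  exact Encodable.encode_injective (by omega)

/-- decS r values are `B+2, B+3`; ackS are `B+4, B+5`. -/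
lemma decS_eq (r : Bool) : decS M r = B M + 2 + (if r then 1 else 0) := by
  cases r <;> rfl
lemma ackS_eq (r : Bool) : ackS M r = B M + 4 + (if r then 1 else 0) := by
  cases r <;> rfl

lemma decS_lt (r : Bool) : B M + 2 ≤ decS M r ∧ decS M r ≤ B M + 3 := by
  cases r <;> simp [decS_eq]
lemma ackS_lt (r : Bool) : B M + 4 ≤ ackS M r ∧ ackS M r ≤ B M + 5 := by
  cases r <;> simp [ackS_eq]

lemma decS_inj {r r' : Bool} (h : decS M r = decS M r') : r = r' := by
  cases r <;> cases r' <;> simp_all [decS_eq]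
lemma ackS_inj {r r' : Bool} (h : ackS M r = ackS M r') : r = r' := by
  cases r <;> cases r' <;> simp_all [ackS_eq]

/-- All functions of the contract, by source state. -/
lemma funs_src_machine (hWF : M.WF) {f : FunDecl} (hf : f ∈ (enc M).funs)
    (h : f.src < B M) : ∃ p ∈ M.prog, p.1 = f.src ∧ f = FD M p := by
  rcases (mem_enc_funs M).1 hf with rfl | ⟨p, hp, hfp⟩
  · exfalso; simp [initFun, s0] at h <;> omega
  rcases funcsOf_cases M hfp with rfl | ⟨r, Q', h2, rfl⟩ | ⟨r, Q', Q'', h2, rfl | rfl | rfl⟩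
  · exact ⟨p, hp, rfl, rfl⟩
  · exfalso; simp [bSt] at h; omega
  · exfalso; simp [bSt] at h; omega
  · exfalso; have := decS_lt M r; simp at h; omega
  · exfalso; have := ackS_lt M r; simp at h; omega

lemma funs_src_s0 (hWF : M.WF) {f : FunDecl} (hf : f ∈ (enc M).funs)
    (h : f.src = s0 M) : f = initFun M := by
  rcases (mem_enc_funs M).1 hf with rfl | ⟨p, hp, hfp⟩
  · rfl
  exfalso
  have hp1 : p.1 < B M := lt_B_of_mem M ((hWF.2.2.2 p hp).1)
  rcases funcsOf_cases M hfp with rfl | ⟨r, Q', h2, rfl⟩ | ⟨r, Q', Q'', h2, rfl | rfl | rfl⟩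
  · simp [FD, s0] at h; omega
  · simp [bSt, s0] at h; omega
  · simp [bSt, s0] at h; omega
  · have := decS_lt M r; simp [s0] at h; omega
  · have := ackS_lt M r; simp [s0] at h; omega

lemma funs_src_b (hWF : M.WF) {f : FunDecl} (hf : f ∈ (enc M).funs)
    {Q : ℕ} (h : f.src = bSt M Q) :
    ∃ p ∈ M.prog, p.1 = Q ∧
      ((∃ r Q', p.2 = .inc r Q' ∧ f = ⟨bSt M Q, 0, [cntE M r, tokE M Q'], uSt M p⟩) ∨
       (∃ r Q' Q'', p.2 = .decjump r Q' Q'' ∧ f = ⟨bSt M Q, 0, [], decS M r⟩)) := by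
  rcases (mem_enc_funs M).1 hf with rfl | ⟨p, hp, hfp⟩
  · exfalso; simp [initFun, s0, bSt] at h; omega
  have hp1 : p.1 < B M := lt_B_of_mem M ((hWF.2.2.2 p hp).1)
  rcases funcsOf_cases M hfp with rfl | ⟨r, Q', h2, rfl⟩ | ⟨r, Q', Q'', h2, rfl | rfl | rfl⟩
  · exfalso; simp [FD, bSt] at h; omega
  · simp only [bSt] at h
    have : p.1 = Q := by omega
    subst this
    exact ⟨p, hp, rfl, Or.inl ⟨r, Q', h2, rfl⟩⟩
  · simp only [bSt] at h
    have : p.1 = Q := by omega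
    subst this
    exact ⟨p, hp, rfl, Or.inr ⟨r, Q', Q'', h2, rfl⟩⟩
  · exfalso; have := decS_lt M r; simp [bSt] at h; omega
  · exfalso; have := ackS_lt M r; simp [bSt] at h; omega

lemma funs_src_dec (hWF : M.WF) {f : FunDecl} (hf : f ∈ (enc M).funs)
    {r : Bool} (h : f.src = decS M r) :
    ∃ p ∈ M.prog, ∃ Q' Q'', p.2 = .decjump r Q' Q'' ∧
      f = ⟨decS M r, 0, [finE M p Q', tokE M Q'], uSt M p⟩ := by
  rcases (mem_enc_funs M).1 hf with rfl | ⟨p, hp, hfp⟩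
  · exfalso; have := decS_lt M r; simp [initFun, s0] at h <;> omega
  have hp1 : p.1 < B M := lt_B_of_mem M ((hWF.2.2.2 p hp).1)
  have hdr := decS_lt M r
  rcases funcsOf_cases M hfp with rfl | ⟨r', Q', h2, rfl⟩ | ⟨r', Q', Q'', h2, rfl | rfl | rfl⟩
  · exfalso; simp [FD] at h; omega
  · exfalso; simp [bSt] at h; omega
  · exfalso; simp [bSt] at h; omega
  · simp only at h
    have : r' = r := decS_inj M h
    subst this
    exact ⟨p, hp, Q', Q'', h2, rfl⟩
  · exfalso; have := ackS_lt M r'; simp at h; omega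

lemma funs_src_ack (hWF : M.WF) {f : FunDecl} (hf : f ∈ (enc M).funs)
    {r : Bool} (h : f.src = ackS M r) :
    ∃ p ∈ M.prog, ∃ Q' Q'', p.2 = .decjump r Q' Q'' ∧
      f = ⟨ackS M r, 0, [finE M p Q'', tokE M Q''], uSt M p⟩ := by
  rcases (mem_enc_funs M).1 hf with rfl | ⟨p, hp, hfp⟩
  · exfalso; have := ackS_lt M r; simp [initFun, s0] at h <;> omega
  have hp1 : p.1 < B M := lt_B_of_mem M ((hWF.2.2.2 p hp).1)
  have har := ackS_lt M r
  rcases funcsOf_cases M hfp with rfl | ⟨r', Q', h2, rfl⟩ | ⟨r', Q', Q'', h2, rfl | rfl | rfl⟩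
  · exfalso; simp [FD] at h; omega
  · exfalso; simp [bSt] at h; omega
  · exfalso; simp [bSt] at h; omega
  · exfalso; have := decS_lt M r'; simp at h; omega
  · simp only at h
    have : r' = r := ackS_inj M h
    subst this
    exact ⟨p, hp, Q', Q'', h2, rfl⟩

/-- States housing no function. -/
def NoFunS (S : ℕ) : Prop :=
  S = w0 M ∨ ∃ k, S = B M + 6 + 5 * k ∨ S = B M + 8 + 5 * k ∨ S = B M + 9 + 5 * k

lemma funs_src_nofun (hWF : M.WF) {f : FunDecl} (hf : f ∈ (enc M).funs)
    {S : ℕ} (hS : NoFunS M S) : f.src ≠ S := by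
  have hS' : S = B M + 1 ∨
      ∃ k, S = B M + 6 + 5 * k ∨ S = B M + 8 + 5 * k ∨ S = B M + 9 + 5 * k := by
    rcases hS with rfl | hk
    · exact Or.inl rfl
    · exact Or.inr hk
  clear hS
  intro h
  rcases (mem_enc_funs M).1 hf with rfl | ⟨p, hp, hfp⟩
  · simp only [initFun, s0] at h
    rcases hS' with rfl | ⟨k, rfl | rfl | rfl⟩ <;> omega
  have hp1 : p.1 < B M := lt_B_of_mem M ((hWF.2.2.2 p hp).1)
  rcases funcsOf_cases M hfp with rfl | ⟨r', Q', h2, rfl⟩ | ⟨r', Q', Q'', h2, rfl | rfl | rfl⟩ <;>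
    simp only [FD, bSt] at h
  · rcases hS' with rfl | ⟨k, rfl | rfl | rfl⟩ <;> omega
  · rcases hS' with rfl | ⟨k, rfl | rfl | rfl⟩ <;> omega
  · rcases hS' with rfl | ⟨k, rfl | rfl | rfl⟩ <;> omega
  · have := decS_lt M r'
    rcases hS' with rfl | ⟨k, rfl | rfl | rfl⟩ <;> omega
  · have := ackS_lt M r'
    rcases hS' with rfl | ⟨k, rfl | rfl | rfl⟩ <;> omega

/-- States with functions but such that, with empty pending, nothing live happens:
`dec`, `ack` and `b` states. -/
def DBS (S : ℕ) : Prop :=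
  S = B M + 2 ∨ S = B M + 3 ∨ S = B M + 4 ∨ S = B M + 5 ∨ ∃ k, S = B M + 7 + 5 * k

/-- Dead pending predicate. -/
def DeadP (S : ℕ) (Ψ : Multiset Ev) : Prop :=
  (∀ e ∈ Ψ, e.time = 0) ∧
    ((NoFunS M S ∧ ∀ e ∈ Ψ, e.src ≠ S) ∨ (DBS M S ∧ Ψ = 0))

end Enc

namespace Enc

variable (M : Minsky)

lemma mstep_states (hWF : M.WF) {x y : ℕ × ℕ × ℕ} (h : MStep M x y) : y.1 ∈ M.states := by
  cases h with
  | inc₁ hp => exact (hWF.2.2.2 _ hp).2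
  | inc₂ hp => exact (hWF.2.2.2 _ hp).2
  | jz₁ hp => exact ((hWF.2.2.2 _ hp).2).1
  | dec₁ hp => exact ((hWF.2.2.2 _ hp).2).2
  | jz₂ hp => exact ((hWF.2.2.2 _ hp).2).1
  | dec₂ hp => exact ((hWF.2.2.2 _ hp).2).2

lemma reach_states (hWF : M.WF) {x y : ℕ × ℕ × ℕ}
    (h : Relation.ReflTransGen (MStep M) x y) (hx : x.1 ∈ M.states) : y.1 ∈ M.states := by
  induction h with
  | refl => exact hx
  | tail _ h _ => exact mstep_states M hWF h

/-- Machine reachability from the start configuration. -/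
def RM (Qi v₁ v₂ Q w₁ w₂ : ℕ) : Prop :=
  Relation.ReflTransGen (MStep M) (Qi, v₁, v₂) (Q, w₁, w₂)

/-- The master invariant for computations of `enc M` starting either at a machine
configuration or at the contract's initial configuration. -/
inductive Inv (Qi v₁ v₂ : ℕ) : Config → Prop
  -- initial-path configurations
  | i0 (hR : RM M Qi v₁ v₂ M.init 0 0) (t : ℕ) :
      Inv Qi v₁ v₂ ⟨s0 M, Sig.none, 0, t⟩
  | i1 (hR : RM M Qi v₁ v₂ M.init 0 0) (t : ℕ) :
      Inv Qi v₁ v₂ ⟨s0 M, Sig.cont (bodyEvents [initEv M, tokE M M.init]) (w0 M), 0, t⟩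
  | i2 (hR : RM M Qi v₁ v₂ M.init 0 0) (t : ℕ) :
      Inv Qi v₁ v₂ ⟨w0 M, Sig.none, {initEv M, tokE M M.init}, t⟩
  | i3 (hR : RM M Qi v₁ v₂ M.init 0 0) (t : ℕ) :
      Inv Qi v₁ v₂ ⟨w0 M, Sig.cont 0 M.init, {tokE M M.init}, t⟩
  -- machine configuration
  | c1 (Q w₁ w₂ : ℕ) (hR : RM M Qi v₁ v₂ Q w₁ w₂) (t : ℕ) :
      Inv Qi v₁ v₂ ⟨Q, Sig.none, Kv M w₁ w₂ + {tokE M Q}, t⟩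
  | c2 (Q w₁ w₂ : ℕ) (p : ℕ × MInstr) (hR : RM M Qi v₁ v₂ Q w₁ w₂)
      (hp : p ∈ M.prog) (h1 : p.1 = Q) (t : ℕ) :
      Inv Qi v₁ v₂ ⟨Q, Sig.cont (bodyEvents [hEv M p]) (aSt M Q), Kv M w₁ w₂ + {tokE M Q}, t⟩
  | c3 (Q w₁ w₂ : ℕ) (p : ℕ × MInstr) (hR : RM M Qi v₁ v₂ Q w₁ w₂)
      (hp : p ∈ M.prog) (h1 : p.1 = Q) (t : ℕ) :
      Inv Qi v₁ v₂ ⟨aSt M Q, Sig.none, Kv M w₁ w₂ + {tokE M Q} + {hEv M p}, t⟩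
  | c4 (Q w₁ w₂ : ℕ) (p : ℕ × MInstr) (hR : RM M Qi v₁ v₂ Q w₁ w₂)
      (hp : p ∈ M.prog) (h1 : p.1 = Q) (t : ℕ) :
      Inv Qi v₁ v₂ ⟨aSt M Q, Sig.cont 0 (bSt M Q), Kv M w₁ w₂ + {hEv M p}, t⟩
  | c5 (Q w₁ w₂ : ℕ) (p : ℕ × MInstr) (hR : RM M Qi v₁ v₂ Q w₁ w₂)
      (hp : p ∈ M.prog) (h1 : p.1 = Q) (t : ℕ) :
      Inv Qi v₁ v₂ ⟨bSt M Q, Sig.none, Kv M w₁ w₂ + {hEv M p}, t⟩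
  | c6 (Q w₁ w₂ : ℕ) (p q : ℕ × MInstr) (r : Bool) (Q' : ℕ)
      (hR : RM M Qi v₁ v₂ Q w₁ w₂) (hp : p ∈ M.prog) (h1 : p.1 = Q)
      (hq : q ∈ M.prog) (hq2 : q = (Q, .inc r Q')) (t : ℕ) :
      Inv Qi v₁ v₂ ⟨bSt M Q, Sig.cont (bodyEvents [cntE M r, tokE M Q']) (uSt M q),
        Kv M w₁ w₂ + {hEv M p}, t⟩
  | c7 (Q w₁ w₂ : ℕ) (p q : ℕ × MInstr) (r : Bool) (Q' : ℕ)
      (hR : RM M Qi v₁ v₂ Q w₁ w₂) (hp : p ∈ M.prog) (h1 : p.1 = Q)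
      (hq : q ∈ M.prog) (hq2 : q = (Q, .inc r Q')) (t : ℕ) :
      Inv Qi v₁ v₂ ⟨uSt M q, Sig.none,
        Kv M w₁ w₂ + {hEv M p} + {cntE M r, tokE M Q'}, t⟩
  | c8 (Q w₁ w₂ : ℕ) (q : ℕ × MInstr) (r : Bool) (Q' : ℕ)
      (hR : RM M Qi v₁ v₂ Q w₁ w₂) (hq : q ∈ M.prog) (hq2 : q = (Q, .inc r Q')) (t : ℕ) :
      Inv Qi v₁ v₂ ⟨uSt M q, Sig.cont 0 Q', Kv M w₁ w₂ + {cntE M r, tokE M Q'}, t⟩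
  | c9 (Q w₁ w₂ : ℕ) (p : ℕ × MInstr) (r : Bool)
      (hR : RM M Qi v₁ v₂ Q w₁ w₂) (hp : p ∈ M.prog) (h1 : p.1 = Q) (t : ℕ) :
      Inv Qi v₁ v₂ ⟨bSt M Q, Sig.cont 0 (decS M r), Kv M w₁ w₂ + {hEv M p}, t⟩
  | c10 (Q w₁ w₂ : ℕ) (p : ℕ × MInstr) (r : Bool)
      (hR : RM M Qi v₁ v₂ Q w₁ w₂) (hp : p ∈ M.prog) (h1 : p.1 = Q) (t : ℕ) :
      Inv Qi v₁ v₂ ⟨decS M r, Sig.none, Kv M w₁ w₂ + {hEv M p}, t⟩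
  | c11 (Q w₁ w₂ : ℕ) (p : ℕ × MInstr) (r : Bool)
      (hR : RM M Qi v₁ v₂ Q (w₁ + cond r 0 1) (w₂ + cond r 1 0))
      (hp : p ∈ M.prog) (h1 : p.1 = Q) (t : ℕ) :
      Inv Qi v₁ v₂ ⟨decS M r, Sig.cont 0 (ackS M r), Kv M w₁ w₂ + {hEv M p}, t⟩
  | c12 (Q w₁ w₂ : ℕ) (p q : ℕ × MInstr) (r : Bool) (Q' Q'' : ℕ)
      (hR : RM M Qi v₁ v₂ Q w₁ w₂) (hp : p ∈ M.prog) (h1 : p.1 = Q)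
      (hq : q ∈ M.prog) (hq2 : q.2 = .decjump r Q' Q'') (hz : cond r w₂ w₁ = 0) (t : ℕ) :
      Inv Qi v₁ v₂ ⟨decS M r, Sig.cont (bodyEvents [finE M q Q', tokE M Q']) (uSt M q),
        Kv M w₁ w₂ + {hEv M p}, t⟩
  | c13 (Q w₁ w₂ : ℕ) (p : ℕ × MInstr) (r : Bool) (Q' Q'' : ℕ)
      (hR : RM M Qi v₁ v₂ Q w₁ w₂) (hp : p ∈ M.prog) (hp2 : p = (Q, .decjump r Q' Q''))
      (hz : cond r w₂ w₁ = 0) (t : ℕ) :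
      Inv Qi v₁ v₂ ⟨uSt M p, Sig.none,
        Kv M w₁ w₂ + {hEv M p} + {finE M p Q', tokE M Q'}, t⟩
  | c14 (Q w₁ w₂ : ℕ) (p : ℕ × MInstr) (r : Bool) (Q' Q'' : ℕ)
      (hR : RM M Qi v₁ v₂ Q w₁ w₂) (hp : p ∈ M.prog) (hp2 : p = (Q, .decjump r Q' Q''))
      (hz : cond r w₂ w₁ = 0) (t : ℕ) :
      Inv Qi v₁ v₂ ⟨uSt M p, Sig.cont 0 (wSt M p), Kv M w₁ w₂ + {finE M p Q', tokE M Q'}, t⟩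
  | c15 (Q w₁ w₂ : ℕ) (p : ℕ × MInstr) (r : Bool) (Q' Q'' : ℕ)
      (hR : RM M Qi v₁ v₂ Q w₁ w₂) (hp : p ∈ M.prog) (hp2 : p = (Q, .decjump r Q' Q''))
      (hz : cond r w₂ w₁ = 0) (t : ℕ) :
      Inv Qi v₁ v₂ ⟨wSt M p, Sig.none, Kv M w₁ w₂ + {finE M p Q', tokE M Q'}, t⟩
  | c16 (Q w₁ w₂ : ℕ) (p : ℕ × MInstr) (r : Bool) (Q' Q'' : ℕ)
      (hR : RM M Qi v₁ v₂ Q w₁ w₂) (hp : p ∈ M.prog) (hp2 : p = (Q, .decjump r Q' Q''))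
      (hz : cond r w₂ w₁ = 0) (t : ℕ) :
      Inv Qi v₁ v₂ ⟨wSt M p, Sig.cont 0 Q', Kv M w₁ w₂ + {tokE M Q'}, t⟩
  | c17 (Q w₁ w₂ : ℕ) (p : ℕ × MInstr) (r : Bool)
      (hR : RM M Qi v₁ v₂ Q (w₁ + cond r 0 1) (w₂ + cond r 1 0))
      (hp : p ∈ M.prog) (h1 : p.1 = Q) (t : ℕ) :
      Inv Qi v₁ v₂ ⟨ackS M r, Sig.none, Kv M w₁ w₂ + {hEv M p}, t⟩
  | c18 (Q w₁ w₂ : ℕ) (p q : ℕ × MInstr) (r : Bool) (Q' Q'' : ℕ)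
      (hR : RM M Qi v₁ v₂ Q (w₁ + cond r 0 1) (w₂ + cond r 1 0))
      (hp : p ∈ M.prog) (h1 : p.1 = Q)
      (hq : q ∈ M.prog) (hq2 : q.2 = .decjump r Q' Q'') (t : ℕ) :
      Inv Qi v₁ v₂ ⟨ackS M r, Sig.cont (bodyEvents [finE M q Q'', tokE M Q'']) (uSt M q),
        Kv M w₁ w₂ + {hEv M p}, t⟩
  | c19 (Q w₁ w₂ : ℕ) (p : ℕ × MInstr) (r : Bool) (Q' Q'' : ℕ)
      (hR : RM M Qi v₁ v₂ Q (w₁ + cond r 0 1) (w₂ + cond r 1 0))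
      (hp : p ∈ M.prog) (hp2 : p = (Q, .decjump r Q' Q'')) (t : ℕ) :
      Inv Qi v₁ v₂ ⟨uSt M p, Sig.none,
        Kv M w₁ w₂ + {hEv M p} + {finE M p Q'', tokE M Q''}, t⟩
  | c20 (Q w₁ w₂ : ℕ) (p : ℕ × MInstr) (r : Bool) (Q' Q'' : ℕ)
      (hR : RM M Qi v₁ v₂ Q (w₁ + cond r 0 1) (w₂ + cond r 1 0))
      (hp : p ∈ M.prog) (hp2 : p = (Q, .decjump r Q' Q'')) (t : ℕ) :
      Inv Qi v₁ v₂ ⟨uSt M p, Sig.cont 0 (wSt M p), Kv M w₁ w₂ + {finE M p Q'', tokE M Q''}, t⟩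
  | c21 (Q w₁ w₂ : ℕ) (p : ℕ × MInstr) (r : Bool) (Q' Q'' : ℕ)
      (hR : RM M Qi v₁ v₂ Q (w₁ + cond r 0 1) (w₂ + cond r 1 0))
      (hp : p ∈ M.prog) (hp2 : p = (Q, .decjump r Q' Q'')) (t : ℕ) :
      Inv Qi v₁ v₂ ⟨wSt M p, Sig.none, Kv M w₁ w₂ + {finE M p Q'', tokE M Q''}, t⟩
  | c22 (Q w₁ w₂ : ℕ) (p : ℕ × MInstr) (r : Bool) (Q' Q'' : ℕ)
      (hR : RM M Qi v₁ v₂ Q (w₁ + cond r 0 1) (w₂ + cond r 1 0))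
      (hp : p ∈ M.prog) (hp2 : p = (Q, .decjump r Q' Q'')) (t : ℕ) :
      Inv Qi v₁ v₂ ⟨wSt M p, Sig.cont 0 Q'', Kv M w₁ w₂ + {tokE M Q''}, t⟩
  -- dead configurations
  | dQ (Q w₁ w₂ : ℕ) (hR : RM M Qi v₁ v₂ Q w₁ w₂) (t : ℕ) :
      Inv Qi v₁ v₂ ⟨Q, Sig.none, 0, t⟩
  | dQc (Q w₁ w₂ : ℕ) (p : ℕ × MInstr) (hR : RM M Qi v₁ v₂ Q w₁ w₂)
      (hp : p ∈ M.prog) (h1 : p.1 = Q) (t : ℕ) :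
      Inv Qi v₁ v₂ ⟨Q, Sig.cont (bodyEvents [hEv M p]) (aSt M Q), 0, t⟩
  | dA (S : ℕ) (Ψ : Multiset Ev) (h : DeadP M S Ψ) (t : ℕ) :
      Inv Qi v₁ v₂ ⟨S, Sig.none, Ψ, t⟩
  | dC (S T : ℕ) (Bo Ψ : Multiset Ev) (h : DeadP M T (Bo + Ψ)) (t : ℕ) :
      Inv Qi v₁ v₂ ⟨S, Sig.cont Bo T, Ψ, t⟩

/-- Inversion of the transition relation. -/
lemma step_cases {C : Contract} {c c' : Config} (h : Step C c c') :
    (c.sig = Sig.none ∧ ∃ f, f ∈ C.funs ∧ f.src = c.state ∧ nored c.pending c.state ∧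
      c' = ⟨c.state, Sig.cont (bodyEvents f.body) f.tgt, c.pending, c.time⟩) ∨
    (∃ Bo T, c.sig = Sig.cont Bo T ∧ c' = ⟨T, Sig.none, Bo + c.pending, c.time⟩) ∨
    (c.sig = Sig.none ∧ ∃ e, e ∈ c.pending ∧ e.time = 0 ∧ e.src = c.state ∧
      c' = ⟨c.state, Sig.cont 0 e.tgt, c.pending.erase e, c.time⟩) ∨
    (c.sig = Sig.none ∧ nored c.pending c.state ∧
      c' = ⟨c.state, Sig.none, tickDown c.pending, c.time + 1⟩) := by
  cases h with
  | func f hf hn => exact Or.inl ⟨rfl, f, hf, rfl, hn, rfl⟩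
  | stateChange => exact Or.inr (Or.inl ⟨_, _, rfl, rfl⟩)
  | eventMatch e he h0 hs => exact Or.inr (Or.inr (Or.inl ⟨rfl, e, he, h0, hs, rfl⟩))
  | tick hn => exact Or.inr (Or.inr (Or.inr ⟨rfl, hn, rfl⟩))

end Enc

namespace Enc

variable (M : Minsky)

@[simp] lemma mem_bodyEvents {e : Ev} {W : List Ev} : e ∈ bodyEvents W ↔ e ∈ W := by
  simp [bodyEvents]

lemma pair_eq (x y : Ev) : ({x, y} : Multiset Ev) = {x} + {y} :=
  (Multiset.singleton_add x {y}).symm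

lemma erase_right (A : Multiset Ev) (x : Ev) : (A + {x}).erase x = A := by
  rw [Multiset.erase_add_right_pos _ (Multiset.mem_singleton_self x),
    Multiset.erase_singleton, add_zero]

lemma erase_mid (A C : Multiset Ev) (x : Ev) : (A + {x} + C).erase x = A + C := by
  rw [Multiset.erase_add_left_pos C (by simp), erase_right]

lemma erase_pair₁ (A : Multiset Ev) (x y : Ev) : (A + {x, y}).erase x = A + {y} := by
  rw [pair_eq, ← add_assoc, erase_mid]

lemma Kv_zero : Kv M 0 0 = 0 := rfl

lemma Kv_succ (w₁ w₂ : ℕ) (r : Bool) :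
    Kv M (w₁ + cond r 0 1) (w₂ + cond r 1 0) = Kv M w₁ w₂ + {cntE M r} := by
  cases r <;> simp only [cond] <;>
    simp only [Kv, Nat.add_zero, Multiset.replicate_succ, ← Multiset.singleton_add] <;> abel

lemma Kv_pair (w₁ w₂ : ℕ) (r : Bool) (X : ℕ) :
    Kv M w₁ w₂ + {cntE M r, tokE M X} =
      Kv M (w₁ + cond r 0 1) (w₂ + cond r 1 0) + {tokE M X} := by
  rw [Kv_succ, pair_eq, ← add_assoc]

lemma cnt_mem_Kv {w₁ w₂ : ℕ} {r : Bool} (h : cond r w₂ w₁ ≠ 0) :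
    cntE M r ∈ Kv M w₁ w₂ := by
  rw [mem_Kv]
  cases r
  · exact Or.inl ⟨h, rfl⟩
  · exact Or.inr ⟨h, rfl⟩

lemma cntE_inj {r r' : Bool} (h : cntE M r = cntE M r') : r = r' := by
  apply decS_inj M
  exact congrArg Ev.src h

lemma Kv_erase (w₁ w₂ : ℕ) (r : Bool) (h : cond r w₂ w₁ ≠ 0) :
    (Kv M w₁ w₂).erase (cntE M r) =
      Kv M (w₁ - cond r 0 1) (w₂ - cond r 1 0) := by
  have h2 : w₁ - cond r 0 1 + cond r 0 1 = w₁ ∧ w₂ - cond r 1 0 + cond r 1 0 = w₂ := by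
    cases r <;> simp only [cond] at h ⊢ <;> omega
  conv_lhs => rw [← h2.1, ← h2.2]
  rw [Kv_succ, erase_right]

lemma wr_zero_of_nored {w₁ w₂ : ℕ} {r : Bool} {X : Multiset Ev}
    (h : nored (Kv M w₁ w₂ + X) (decS M r)) : cond r w₂ w₁ = 0 := by
  by_contra hne
  exact h (cntE M r) (Multiset.mem_add.2 (Or.inl (cnt_mem_Kv M hne))) rfl rfl

lemma t0_Kv {w₁ w₂ : ℕ} : ∀ e ∈ Kv M w₁ w₂, e.time = 0 := by
  intro e he
  rcases (mem_Kv M).1 he with ⟨-, rfl⟩ | ⟨-, rfl⟩ <;> rfl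

lemma t0_add {P Q : Multiset Ev} (hP : ∀ e ∈ P, e.time = 0) (hQ : ∀ e ∈ Q, e.time = 0) :
    ∀ e ∈ P + Q, e.time = 0 := by
  intro e he
  rcases Multiset.mem_add.1 he with h | h
  · exact hP e h
  · exact hQ e h

lemma t0_single {x : Ev} (hx : x.time = 0) : ∀ e ∈ ({x} : Multiset Ev), e.time = 0 := by
  intro e he; rw [Multiset.mem_singleton] at he; subst he; exact hx

lemma t0_pair {x y : Ev} (hx : x.time = 0) (hy : y.time = 0) :
    ∀ e ∈ ({x, y} : Multiset Ev), e.time = 0 := by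
  intro e he
  rcases Multiset.mem_cons.1 he with rfl | he
  · exact hx
  · rw [Multiset.mem_singleton] at he; subst he; exact hy

lemma t0_zero : ∀ e ∈ (0 : Multiset Ev), e.time = 0 := by simp

end Enc

namespace Enc

lemma step_cases' {C : Contract} {S : ℕ} {σ : Sig} {P : Multiset Ev} {t : ℕ} {c' : Config}
    (h : Step C ⟨S, σ, P, t⟩ c') :
    (σ = Sig.none ∧ ∃ f, f ∈ C.funs ∧ f.src = S ∧ nored P S ∧
      c' = ⟨S, Sig.cont (bodyEvents f.body) f.tgt, P, t⟩) ∨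
    (∃ Bo T, σ = Sig.cont Bo T ∧ c' = ⟨T, Sig.none, Bo + P, t⟩) ∨
    (σ = Sig.none ∧ ∃ e, e ∈ P ∧ e.time = 0 ∧ e.src = S ∧
      c' = ⟨S, Sig.cont 0 e.tgt, P.erase e, t⟩) ∨
    (σ = Sig.none ∧ nored P S ∧ c' = ⟨S, Sig.none, tickDown P, t + 1⟩) :=
  step_cases h

variable {M : Minsky} {Qi v₁ v₂ : ℕ}

theorem inv_step (hWF : M.WF) (hQi : Qi ∈ M.states)
    {c c' : Config} (hI : Inv M Qi v₁ v₂ c) (hs : Step (enc M) c c') :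
    Inv M Qi v₁ v₂ c' := by
  cases hI with
  | i0 hR t =>
    rcases step_cases' hs with ⟨-, f, hf, hsrc, hnor, rfl⟩ | ⟨Bo, T, hsig, rfl⟩ |
      ⟨-, e, he, he0, hsrc, rfl⟩ | ⟨-, hnor, rfl⟩
    · rw [funs_src_s0 M hWF hf hsrc]
      exact Inv.i1 hR t
    · simp at hsig
    · simp at he
    · rw [tickDown_zero t0_zero]
      exact Inv.i0 hR (t + 1)
  | i1 hR t =>
    rcases step_cases' hs with ⟨hsg, -⟩ | ⟨Bo, T, hsig, rfl⟩ | ⟨hsg, -⟩ | ⟨hsg, -⟩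
    · simp at hsg
    · injection hsig with h1 h2; subst h1; subst h2
      rw [add_zero]
      exact Inv.i2 hR t
    · simp at hsg
    · simp at hsg
  | i2 hR t =>
    rcases step_cases' hs with ⟨-, f, hf, hsrc, hnor, rfl⟩ | ⟨Bo, T, hsig, rfl⟩ |
      ⟨-, e, he, he0, hsrc, rfl⟩ | ⟨-, hnor, rfl⟩
    · exact absurd hsrc (funs_src_nofun M hWF hf (Or.inl rfl))
    · simp at hsig
    · rcases Multiset.mem_cons.1 he with rfl | he
      · rw [show ({initEv M, tokE M M.init} : Multiset Ev).erase (initEv M)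
            = {tokE M M.init} by rw [Multiset.insert_eq_cons, Multiset.erase_cons_head]]
        exact Inv.i3 hR t
      · rw [Multiset.mem_singleton] at he; subst he
        exfalso
        simp only [tok_src, aSt, w0] at hsrc
        omega
    · exact absurd rfl (hnor (initEv M) (Multiset.mem_cons_self _ _) rfl)
  | i3 hR t =>
    rcases step_cases' hs with ⟨hsg, -⟩ | ⟨Bo, T, hsig, rfl⟩ | ⟨hsg, -⟩ | ⟨hsg, -⟩
    · simp at hsg
    · injection hsig with h1 h2; subst h1; subst h2
      rw [zero_add, show ({tokE M M.init} : Multiset Ev) = Kv M 0 0 + {tokE M M.init} by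
        rw [Kv_zero, zero_add]]
      exact Inv.c1 M.init 0 0 hR t
    · simp at hsg
    · simp at hsg
  | c1 Q w₁ w₂ hR t =>
    have hQB : Q < B M := lt_B_of_mem M (reach_states M hWF hR hQi)
    rcases step_cases' hs with ⟨-, f, hf, hsrc, hnor, rfl⟩ | ⟨Bo, T, hsig, rfl⟩ |
      ⟨-, e, he, he0, hsrc, rfl⟩ | ⟨-, hnor, rfl⟩
    · obtain ⟨p, hp, hp1, rfl⟩ := funs_src_machine M hWF hf (hsrc ▸ hQB)
      have hp1' : p.1 = Q := hsrc
      rw [show (FD M p).tgt = aSt M p.1 from rfl, hp1']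
      exact Inv.c2 Q w₁ w₂ p hR hp hp1' t
    · simp at hsig
    · exfalso
      rcases Multiset.mem_add.1 he with hK | hT'
      · rcases (mem_Kv M).1 hK with ⟨-, rfl⟩ | ⟨-, rfl⟩ <;>
          [have := decS_lt M false; have := decS_lt M true] <;>
          simp only [cnt_src] at hsrc <;> omega
      · rw [Multiset.mem_singleton] at hT'; subst hT'
        simp only [tok_src, aSt] at hsrc; omega
    · rw [tickDown_zero (t0_add (t0_Kv M) (t0_single rfl))]
      exact Inv.dQ Q w₁ w₂ hR (t + 1)
  | c2 Q w₁ w₂ p hR hp h1 t =>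
    rcases step_cases' hs with ⟨hsg, -⟩ | ⟨Bo, T, hsig, rfl⟩ | ⟨hsg, -⟩ | ⟨hsg, -⟩
    · simp at hsg
    · injection hsig with h1' h2'; subst h1'; subst h2'
      rw [show bodyEvents [hEv M p] = {hEv M p} from rfl, add_comm]
      exact Inv.c3 Q w₁ w₂ p hR hp h1 t
    · simp at hsg
    · simp at hsg
  | c3 Q w₁ w₂ p hR hp h1 t =>
    rcases step_cases' hs with ⟨-, f, hf, hsrc, hnor, rfl⟩ | ⟨Bo, T, hsig, rfl⟩ |
      ⟨-, e, he, he0, hsrc, rfl⟩ | ⟨-, hnor, rfl⟩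
    · exact absurd hsrc (funs_src_nofun M hWF hf (Or.inr ⟨Q, Or.inl rfl⟩))
    · simp at hsig
    · rcases Multiset.mem_add.1 he with hK | hH
      · rcases Multiset.mem_add.1 hK with hK | hT'
        · exfalso
          rcases (mem_Kv M).1 hK with ⟨-, rfl⟩ | ⟨-, rfl⟩ <;>
            [have := decS_lt M false; have := decS_lt M true] <;>
            simp only [cnt_src, aSt] at hsrc <;> omega
        · rw [Multiset.mem_singleton] at hT'; subst hT'
          rw [erase_mid]
          exact Inv.c4 Q w₁ w₂ p hR hp h1 t
      · exfalso
        rw [Multiset.mem_singleton] at hH; subst hH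
        simp only [hEv_src, uSt, aSt] at hsrc; omega
    · exact absurd rfl (hnor (tokE M Q) (by simp) rfl)
  | c4 Q w₁ w₂ p hR hp h1 t =>
    rcases step_cases' hs with ⟨hsg, -⟩ | ⟨Bo, T, hsig, rfl⟩ | ⟨hsg, -⟩ | ⟨hsg, -⟩
    · simp at hsg
    · injection hsig with h1' h2'; subst h1'; subst h2'
      rw [zero_add]
      exact Inv.c5 Q w₁ w₂ p hR hp h1 t
    · simp at hsg
    · simp at hsg
  | c5 Q w₁ w₂ p hR hp h1 t =>
    rcases step_cases' hs with ⟨-, f, hf, hsrc, hnor, rfl⟩ | ⟨Bo, T, hsig, rfl⟩ |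
      ⟨-, e, he, he0, hsrc, rfl⟩ | ⟨-, hnor, rfl⟩
    · obtain ⟨q, hq, hq1, hcase⟩ := funs_src_b M hWF hf hsrc
      rcases hcase with ⟨r, Q', hq2, rfl⟩ | ⟨r, Q', Q'', hq2, rfl⟩
      · have hq' : q = (Q, .inc r Q') := by
          rcases q with ⟨qa, qb⟩; simp only at hq1 hq2; rw [hq1, hq2]
        exact Inv.c6 Q w₁ w₂ p q r Q' hR hp h1 hq hq' t
      · exact Inv.c9 Q w₁ w₂ p r hR hp h1 t
    · simp at hsig
    · exfalso
      rcases Multiset.mem_add.1 he with hK | hH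
      · rcases (mem_Kv M).1 hK with ⟨-, rfl⟩ | ⟨-, rfl⟩ <;>
          [have := decS_lt M false; have := decS_lt M true] <;>
          simp only [cnt_src, bSt] at hsrc <;> omega
      · rw [Multiset.mem_singleton] at hH; subst hH
        simp only [hEv_src, uSt, bSt] at hsrc; omega
    · rw [tickDown_zero (t0_add (t0_Kv M) (t0_single rfl))]
      exact Inv.dA _ 0 ⟨t0_zero, Or.inr ⟨Or.inr (Or.inr (Or.inr (Or.inr ⟨Q, rfl⟩))), rfl⟩⟩ (t + 1)
  | c6 Q w₁ w₂ p q r Q' hR hp h1 hq hq2 t =>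
    rcases step_cases' hs with ⟨hsg, -⟩ | ⟨Bo, T, hsig, rfl⟩ | ⟨hsg, -⟩ | ⟨hsg, -⟩
    · simp at hsg
    · injection hsig with h1' h2'; subst h1'; subst h2'
      rw [show bodyEvents [cntE M r, tokE M Q'] = {cntE M r, tokE M Q'} from rfl, add_comm]
      exact Inv.c7 Q w₁ w₂ p q r Q' hR hp h1 hq hq2 t
    · simp at hsg
    · simp at hsg
  | c7 Q w₁ w₂ p q r Q' hR hp h1 hq hq2 t =>
    rcases step_cases' hs with ⟨-, f, hf, hsrc, hnor, rfl⟩ | ⟨Bo, T, hsig, rfl⟩ |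
      ⟨-, e, he, he0, hsrc, rfl⟩ | ⟨-, hnor, rfl⟩
    · exact absurd hsrc
        (funs_src_nofun M hWF hf (Or.inr ⟨Encodable.encode q, Or.inr (Or.inl rfl)⟩))
    · simp at hsig
    · rcases Multiset.mem_add.1 he with hK | hP
      · rcases Multiset.mem_add.1 hK with hK | hH
        · exfalso
          rcases (mem_Kv M).1 hK with ⟨-, rfl⟩ | ⟨-, rfl⟩ <;>
            [have := decS_lt M false; have := decS_lt M true] <;>
            simp only [cnt_src, uSt] at hsrc <;> omega
        · rw [Multiset.mem_singleton] at hH; subst hH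
          simp only [hEv_src] at hsrc
          have hpq : p = q := uSt_inj M hsrc
          subst hpq
          rw [erase_mid, show (hEv M p).tgt = Q' by rw [hq2]; rfl]
          exact Inv.c8 Q w₁ w₂ p r Q' hR hq hq2 t
      · exfalso
        rcases Multiset.mem_cons.1 hP with rfl | hP
        · have := decS_lt M r; simp only [cnt_src, uSt] at hsrc; omega
        · rw [Multiset.mem_singleton] at hP; subst hP
          simp only [tok_src, aSt, uSt] at hsrc; omega
    · rw [tickDown_zero (t0_add (t0_add (t0_Kv M) (t0_single rfl)) (t0_pair rfl rfl))]
      exact Inv.dA _ 0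
        ⟨t0_zero, Or.inl ⟨Or.inr ⟨Encodable.encode q, Or.inr (Or.inl rfl)⟩, by simp⟩⟩ (t + 1)
  | c8 Q w₁ w₂ q r Q' hR hq hq2 t =>
    rcases step_cases' hs with ⟨hsg, -⟩ | ⟨Bo, T, hsig, rfl⟩ | ⟨hsg, -⟩ | ⟨hsg, -⟩
    · simp at hsg
    · injection hsig with h1' h2'; subst h1'; subst h2'
      rw [zero_add, Kv_pair]
      refine Inv.c1 Q' _ _ (hR.tail ?_) t
      cases r
      · exact MStep.inc₁ (hq2 ▸ hq)
      · exact MStep.inc₂ (hq2 ▸ hq)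
    · simp at hsg
    · simp at hsg
  | c9 Q w₁ w₂ p r hR hp h1 t =>
    rcases step_cases' hs with ⟨hsg, -⟩ | ⟨Bo, T, hsig, rfl⟩ | ⟨hsg, -⟩ | ⟨hsg, -⟩
    · simp at hsg
    · injection hsig with h1' h2'; subst h1'; subst h2'
      rw [zero_add]
      exact Inv.c10 Q w₁ w₂ p r hR hp h1 t
    · simp at hsg
    · simp at hsg
  | c10 Q w₁ w₂ p r hR hp h1 t =>
    rcases step_cases' hs with ⟨-, f, hf, hsrc, hnor, rfl⟩ | ⟨Bo, T, hsig, rfl⟩ |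
      ⟨-, e, he, he0, hsrc, rfl⟩ | ⟨-, hnor, rfl⟩
    · obtain ⟨q, hq, Q', Q'', hq2, rfl⟩ := funs_src_dec M hWF hf hsrc
      have hz := wr_zero_of_nored M hnor
      exact Inv.c12 Q w₁ w₂ p q r Q' Q'' hR hp h1 hq hq2 hz t
    · simp at hsig
    · rcases Multiset.mem_add.1 he with hK | hH
      · rcases (mem_Kv M).1 hK with ⟨hw, rfl⟩ | ⟨hw, rfl⟩
        · simp only [cnt_src] at hsrc
          have hr : r = false := (decS_inj M hsrc).symm
          subst hr
          rw [Multiset.erase_add_left_pos _ (cnt_mem_Kv M (by simpa using hw)),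
            Kv_erase M w₁ w₂ false (by simpa using hw)]
          obtain ⟨k, rfl⟩ := Nat.exists_eq_succ_of_ne_zero hw
          exact Inv.c11 Q k w₂ p false (by simpa using hR) hp h1 t
        · simp only [cnt_src] at hsrc
          have hr : r = true := (decS_inj M hsrc).symm
          subst hr
          rw [Multiset.erase_add_left_pos _ (cnt_mem_Kv M (by simpa using hw)),
            Kv_erase M w₁ w₂ true (by simpa using hw)]
          obtain ⟨k, rfl⟩ := Nat.exists_eq_succ_of_ne_zero hw
          exact Inv.c11 Q w₁ k p true (by simpa using hR) hp h1 t
      · exfalso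
        rw [Multiset.mem_singleton] at hH; subst hH
        have := decS_lt M r
        simp only [hEv_src, uSt] at hsrc; omega
    · rw [tickDown_zero (t0_add (t0_Kv M) (t0_single rfl))]
      refine Inv.dA _ 0 ⟨t0_zero, Or.inr ⟨?_, rfl⟩⟩ (t + 1)
      cases r
      · exact Or.inl rfl
      · exact Or.inr (Or.inl rfl)
  | c11 Q w₁ w₂ p r hR hp h1 t =>
    rcases step_cases' hs with ⟨hsg, -⟩ | ⟨Bo, T, hsig, rfl⟩ | ⟨hsg, -⟩ | ⟨hsg, -⟩
    · simp at hsg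
    · injection hsig with h1' h2'; subst h1'; subst h2'
      rw [zero_add]
      exact Inv.c17 Q w₁ w₂ p r hR hp h1 t
    · simp at hsg
    · simp at hsg
  | c12 Q w₁ w₂ p q r Q' Q'' hR hp h1 hq hq2 hz t =>
    rcases step_cases' hs with ⟨hsg, -⟩ | ⟨Bo, T, hsig, rfl⟩ | ⟨hsg, -⟩ | ⟨hsg, -⟩
    · simp at hsg
    · injection hsig with h1' h2'; subst h1'; subst h2'
      by_cases hpq : p = q
      · subst hpq
        have hp2 : p = (Q, .decjump r Q' Q'') := by
          rcases p with ⟨pa, pb⟩; simp only at h1 hq2; rw [h1, hq2]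
        rw [show bodyEvents [finE M p Q', tokE M Q'] = {finE M p Q', tokE M Q'} from rfl,
          add_comm]
        exact Inv.c13 Q w₁ w₂ p r Q' Q'' hR hp hp2 hz t
      · refine Inv.dA _ _ ⟨?_, Or.inl ⟨Or.inr ⟨Encodable.encode q, Or.inr (Or.inl rfl)⟩, ?_⟩⟩ t
        · intro e hee
          rcases Multiset.mem_add.1 hee with hP | hP
          · rcases (by simpa using hP : e = finE M q Q' ∨ e = tokE M Q') with rfl | rfl <;> rfl
          · rcases Multiset.mem_add.1 hP with hP | hP
            · exact t0_Kv M e hP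
            · exact t0_single rfl e hP
        · intro e hee
          rcases Multiset.mem_add.1 hee with hP | hP
          · rcases (by simpa using hP : e = finE M q Q' ∨ e = tokE M Q') with rfl | rfl
            · simp only [finE_src, wSt, uSt]; omega
            · simp only [tok_src, aSt, uSt]; omega
          · rcases Multiset.mem_add.1 hP with hP | hP
            · rcases (mem_Kv M).1 hP with ⟨-, rfl⟩ | ⟨-, rfl⟩ <;>
                [have := decS_lt M false; have := decS_lt M true] <;>
                simp only [cnt_src, uSt] <;> omega
            · rw [Multiset.mem_singleton] at hP; subst hP
              simp only [hEv_src, uSt]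
              intro hcon
              exact hpq (uSt_inj M hcon)
    · simp at hsg
    · simp at hsg
  | c13 Q w₁ w₂ p r Q' Q'' hR hp hp2 hz t =>
    rcases step_cases' hs with ⟨-, f, hf, hsrc, hnor, rfl⟩ | ⟨Bo, T, hsig, rfl⟩ |
      ⟨-, e, he, he0, hsrc, rfl⟩ | ⟨-, hnor, rfl⟩
    · exact absurd hsrc
        (funs_src_nofun M hWF hf (Or.inr ⟨Encodable.encode p, Or.inr (Or.inl rfl)⟩))
    · simp at hsig
    · rcases Multiset.mem_add.1 he with hK | hP
      · rcases Multiset.mem_add.1 hK with hK | hH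
        · exfalso
          rcases (mem_Kv M).1 hK with ⟨-, rfl⟩ | ⟨-, rfl⟩ <;>
            [have := decS_lt M false; have := decS_lt M true] <;>
            simp only [cnt_src, uSt] at hsrc <;> omega
        · rw [Multiset.mem_singleton] at hH; subst hH
          rw [erase_mid, show (hEv M p).tgt = wSt M p by rw [hp2]; rfl]
          exact Inv.c14 Q w₁ w₂ p r Q' Q'' hR hp hp2 hz t
      · exfalso
        rcases Multiset.mem_cons.1 hP with rfl | hP
        · simp only [finE_src, wSt, uSt] at hsrc; omega
        · rw [Multiset.mem_singleton] at hP; subst hP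
          simp only [tok_src, aSt, uSt] at hsrc; omega
    · exact absurd rfl (hnor (hEv M p) (by simp) rfl)
  | c14 Q w₁ w₂ p r Q' Q'' hR hp hp2 hz t =>
    rcases step_cases' hs with ⟨hsg, -⟩ | ⟨Bo, T, hsig, rfl⟩ | ⟨hsg, -⟩ | ⟨hsg, -⟩
    · simp at hsg
    · injection hsig with h1' h2'; subst h1'; subst h2'
      rw [zero_add]
      exact Inv.c15 Q w₁ w₂ p r Q' Q'' hR hp hp2 hz t
    · simp at hsg
    · simp at hsg
  | c15 Q w₁ w₂ p r Q' Q'' hR hp hp2 hz t =>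
    rcases step_cases' hs with ⟨-, f, hf, hsrc, hnor, rfl⟩ | ⟨Bo, T, hsig, rfl⟩ |
      ⟨-, e, he, he0, hsrc, rfl⟩ | ⟨-, hnor, rfl⟩
    · exact absurd hsrc
        (funs_src_nofun M hWF hf (Or.inr ⟨Encodable.encode p, Or.inr (Or.inr rfl)⟩))
    · simp at hsig
    · rcases Multiset.mem_add.1 he with hK | hP
      · exfalso
        rcases (mem_Kv M).1 hK with ⟨-, rfl⟩ | ⟨-, rfl⟩ <;>
          [have := decS_lt M false; have := decS_lt M true] <;>
          simp only [cnt_src, wSt] at hsrc <;> omega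
      · rcases Multiset.mem_cons.1 hP with rfl | hP
        · rw [erase_pair₁, show (finE M p Q').tgt = Q' from rfl]
          exact Inv.c16 Q w₁ w₂ p r Q' Q'' hR hp hp2 hz t
        · exfalso
          rw [Multiset.mem_singleton] at hP; subst hP
          simp only [tok_src, aSt, wSt] at hsrc; omega
    · exact absurd rfl (hnor (finE M p Q') (by simp) rfl)
  | c16 Q w₁ w₂ p r Q' Q'' hR hp hp2 hz t =>
    rcases step_cases' hs with ⟨hsg, -⟩ | ⟨Bo, T, hsig, rfl⟩ | ⟨hsg, -⟩ | ⟨hsg, -⟩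
    · simp at hsg
    · injection hsig with h1' h2'; subst h1'; subst h2'
      rw [zero_add]
      refine Inv.c1 Q' w₁ w₂ (hR.tail ?_) t
      cases r
      · simp only [cond] at hz; subst hz
        exact MStep.jz₁ (hp2 ▸ hp)
      · simp only [cond] at hz; subst hz
        exact MStep.jz₂ (hp2 ▸ hp)
    · simp at hsg
    · simp at hsg
  | c17 Q w₁ w₂ p r hR hp h1 t =>
    rcases step_cases' hs with ⟨-, f, hf, hsrc, hnor, rfl⟩ | ⟨Bo, T, hsig, rfl⟩ |
      ⟨-, e, he, he0, hsrc, rfl⟩ | ⟨-, hnor, rfl⟩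
    · obtain ⟨q, hq, Q', Q'', hq2, rfl⟩ := funs_src_ack M hWF hf hsrc
      exact Inv.c18 Q w₁ w₂ p q r Q' Q'' hR hp h1 hq hq2 t
    · simp at hsig
    · exfalso
      rcases Multiset.mem_add.1 he with hK | hH
      · have := ackS_lt M r
        rcases (mem_Kv M).1 hK with ⟨-, rfl⟩ | ⟨-, rfl⟩ <;>
          [have := decS_lt M false; have := decS_lt M true] <;>
          simp only [cnt_src] at hsrc <;> omega
      · rw [Multiset.mem_singleton] at hH; subst hH
        have := ackS_lt M r
        simp only [hEv_src, uSt] at hsrc; omega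
    · rw [tickDown_zero (t0_add (t0_Kv M) (t0_single rfl))]
      refine Inv.dA _ 0 ⟨t0_zero, Or.inr ⟨?_, rfl⟩⟩ (t + 1)
      cases r
      · exact Or.inr (Or.inr (Or.inl rfl))
      · exact Or.inr (Or.inr (Or.inr (Or.inl rfl)))
  | c18 Q w₁ w₂ p q r Q' Q'' hR hp h1 hq hq2 t =>
    rcases step_cases' hs with ⟨hsg, -⟩ | ⟨Bo, T, hsig, rfl⟩ | ⟨hsg, -⟩ | ⟨hsg, -⟩
    · simp at hsg
    · injection hsig with h1' h2'; subst h1'; subst h2'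
      by_cases hpq : p = q
      · subst hpq
        have hp2 : p = (Q, .decjump r Q' Q'') := by
          rcases p with ⟨pa, pb⟩; simp only at h1 hq2; rw [h1, hq2]
        rw [show bodyEvents [finE M p Q'', tokE M Q''] = {finE M p Q'', tokE M Q''} from rfl,
          add_comm]
        exact Inv.c19 Q w₁ w₂ p r Q' Q'' hR hp hp2 t
      · refine Inv.dA _ _ ⟨?_, Or.inl ⟨Or.inr ⟨Encodable.encode q, Or.inr (Or.inl rfl)⟩, ?_⟩⟩ t
        · intro e hee
          rcases Multiset.mem_add.1 hee with hP | hP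
          · rcases (by simpa using hP : e = finE M q Q'' ∨ e = tokE M Q'') with rfl | rfl <;> rfl
          · rcases Multiset.mem_add.1 hP with hP | hP
            · exact t0_Kv M e hP
            · exact t0_single rfl e hP
        · intro e hee
          rcases Multiset.mem_add.1 hee with hP | hP
          · rcases (by simpa using hP : e = finE M q Q'' ∨ e = tokE M Q'') with rfl | rfl
            · simp only [finE_src, wSt, uSt]; omega
            · simp only [tok_src, aSt, uSt]; omega
          · rcases Multiset.mem_add.1 hP with hP | hP
            · rcases (mem_Kv M).1 hP with ⟨-, rfl⟩ | ⟨-, rfl⟩ <;>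
                [have := decS_lt M false; have := decS_lt M true] <;>
                simp only [cnt_src, uSt] <;> omega
            · rw [Multiset.mem_singleton] at hP; subst hP
              simp only [hEv_src, uSt]
              intro hcon
              exact hpq (uSt_inj M hcon)
    · simp at hsg
    · simp at hsg
  | c19 Q w₁ w₂ p r Q' Q'' hR hp hp2 t =>
    rcases step_cases' hs with ⟨-, f, hf, hsrc, hnor, rfl⟩ | ⟨Bo, T, hsig, rfl⟩ |
      ⟨-, e, he, he0, hsrc, rfl⟩ | ⟨-, hnor, rfl⟩
    · exact absurd hsrc
        (funs_src_nofun M hWF hf (Or.inr ⟨Encodable.encode p, Or.inr (Or.inl rfl)⟩))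
    · simp at hsig
    · rcases Multiset.mem_add.1 he with hK | hP
      · rcases Multiset.mem_add.1 hK with hK | hH
        · exfalso
          rcases (mem_Kv M).1 hK with ⟨-, rfl⟩ | ⟨-, rfl⟩ <;>
            [have := decS_lt M false; have := decS_lt M true] <;>
            simp only [cnt_src, uSt] at hsrc <;> omega
        · rw [Multiset.mem_singleton] at hH; subst hH
          rw [erase_mid, show (hEv M p).tgt = wSt M p by rw [hp2]; rfl]
          exact Inv.c20 Q w₁ w₂ p r Q' Q'' hR hp hp2 t
      · exfalso
        rcases Multiset.mem_cons.1 hP with rfl | hP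
        · simp only [finE_src, wSt, uSt] at hsrc; omega
        · rw [Multiset.mem_singleton] at hP; subst hP
          simp only [tok_src, aSt, uSt] at hsrc; omega
    · exact absurd rfl (hnor (hEv M p) (by simp) rfl)
  | c20 Q w₁ w₂ p r Q' Q'' hR hp hp2 t =>
    rcases step_cases' hs with ⟨hsg, -⟩ | ⟨Bo, T, hsig, rfl⟩ | ⟨hsg, -⟩ | ⟨hsg, -⟩
    · simp at hsg
    · injection hsig with h1' h2'; subst h1'; subst h2'
      rw [zero_add]
      exact Inv.c21 Q w₁ w₂ p r Q' Q'' hR hp hp2 t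
    · simp at hsg
    · simp at hsg
  | c21 Q w₁ w₂ p r Q' Q'' hR hp hp2 t =>
    rcases step_cases' hs with ⟨-, f, hf, hsrc, hnor, rfl⟩ | ⟨Bo, T, hsig, rfl⟩ |
      ⟨-, e, he, he0, hsrc, rfl⟩ | ⟨-, hnor, rfl⟩
    · exact absurd hsrc
        (funs_src_nofun M hWF hf (Or.inr ⟨Encodable.encode p, Or.inr (Or.inr rfl)⟩))
    · simp at hsig
    · rcases Multiset.mem_add.1 he with hK | hP
      · exfalso
        rcases (mem_Kv M).1 hK with ⟨-, rfl⟩ | ⟨-, rfl⟩ <;>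
          [have := decS_lt M false; have := decS_lt M true] <;>
          simp only [cnt_src, wSt] at hsrc <;> omega
      · rcases Multiset.mem_cons.1 hP with rfl | hP
        · rw [erase_pair₁, show (finE M p Q'').tgt = Q'' from rfl]
          exact Inv.c22 Q w₁ w₂ p r Q' Q'' hR hp hp2 t
        · exfalso
          rw [Multiset.mem_singleton] at hP; subst hP
          simp only [tok_src, aSt, wSt] at hsrc; omega
    · exact absurd rfl (hnor (finE M p Q'') (by simp) rfl)
  | c22 Q w₁ w₂ p r Q' Q'' hR hp hp2 t =>
    rcases step_cases' hs with ⟨hsg, -⟩ | ⟨Bo, T, hsig, rfl⟩ | ⟨hsg, -⟩ | ⟨hsg, -⟩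
    · simp at hsg
    · injection hsig with h1' h2'; subst h1'; subst h2'
      rw [zero_add]
      refine Inv.c1 Q'' w₁ w₂ (hR.tail ?_) t
      cases r
      · exact MStep.dec₁ (hp2 ▸ hp)
      · exact MStep.dec₂ (hp2 ▸ hp)
    · simp at hsg
    · simp at hsg
  | dQ Q w₁ w₂ hR t =>
    have hQB : Q < B M := lt_B_of_mem M (reach_states M hWF hR hQi)
    rcases step_cases' hs with ⟨-, f, hf, hsrc, hnor, rfl⟩ | ⟨Bo, T, hsig, rfl⟩ |
      ⟨-, e, he, he0, hsrc, rfl⟩ | ⟨-, hnor, rfl⟩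
    · obtain ⟨p, hp, hp1, rfl⟩ := funs_src_machine M hWF hf (hsrc ▸ hQB)
      have hp1' : p.1 = Q := hsrc
      rw [show (FD M p).tgt = aSt M p.1 from rfl, hp1']
      exact Inv.dQc Q w₁ w₂ p hR hp hp1' t
    · simp at hsig
    · simp at he
    · rw [tickDown_zero t0_zero]
      exact Inv.dQ Q w₁ w₂ hR (t + 1)
  | dQc Q w₁ w₂ p hR hp h1 t =>
    rcases step_cases' hs with ⟨hsg, -⟩ | ⟨Bo, T, hsig, rfl⟩ | ⟨hsg, -⟩ | ⟨hsg, -⟩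
    · simp at hsg
    · injection hsig with h1' h2'; subst h1'; subst h2'
      refine Inv.dA _ _ ⟨?_, Or.inl ⟨Or.inr ⟨Q, Or.inl rfl⟩, ?_⟩⟩ t
      · exact t0_add (t0_single rfl) t0_zero
      · intro e hee
        rcases Multiset.mem_add.1 hee with hP | hP
        · rw [show bodyEvents [hEv M p] = {hEv M p} from rfl, Multiset.mem_singleton] at hP
          subst hP
          simp only [hEv_src, uSt, aSt]; omega
        · simp at hP
    · simp at hsg
    · simp at hsg
  | dA S Ψ h t =>
    obtain ⟨ht, hd⟩ := h
    rcases step_cases' hs with ⟨-, f, hf, hsrc, hnor, rfl⟩ | ⟨Bo, T, hsig, rfl⟩ |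
      ⟨-, e, he, he0, hsrc, rfl⟩ | ⟨-, hnor, rfl⟩
    · rcases hd with ⟨hn, hsc⟩ | ⟨hdb, rfl⟩
      · exact absurd hsrc (funs_src_nofun M hWF hf hn)
      · -- pending is empty; any function can fire, leading to a dead continuation
        have hSB : B M + 2 ≤ S := by
          rcases hdb with rfl | rfl | rfl | rfl | ⟨k, rfl⟩ <;> omega
        rcases (mem_enc_funs M).1 hf with rfl | ⟨q, hq, hfq⟩
        · exfalso; simp only [initFun, s0] at hsrc; omega
        have hq1 : q.1 < B M := lt_B_of_mem M ((hWF.2.2.2 q hq).1)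
        rcases funcsOf_cases M hfq with rfl | ⟨r, Q', hq2, rfl⟩ |
          ⟨r, Q', Q'', hq2, rfl | rfl | rfl⟩
        · exfalso; simp only [FD] at hsrc; omega
        · refine Inv.dC _ _ _ _ ⟨?_, Or.inl ⟨Or.inr ⟨Encodable.encode q, Or.inr (Or.inl rfl)⟩,
            ?_⟩⟩ t
          · exact t0_add (t0_pair rfl rfl) t0_zero
          · intro e hee
            rcases Multiset.mem_add.1 hee with hP | hP
            · rcases (by simpa using hP : e = cntE M r ∨ e = tokE M Q') with rfl | rfl
              · have := decS_lt M r
                simp only [cnt_src, uSt]; omega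
              · simp only [tok_src, aSt, uSt]; omega
            · simp at hP
        · refine Inv.dC _ _ _ _ ⟨?_, Or.inr ⟨?_, ?_⟩⟩ t
          · exact t0_add t0_zero t0_zero
          · cases r
            · exact Or.inl rfl
            · exact Or.inr (Or.inl rfl)
          · simp [bodyEvents]
        · refine Inv.dC _ _ _ _ ⟨?_, Or.inl ⟨Or.inr ⟨Encodable.encode q, Or.inr (Or.inl rfl)⟩,
            ?_⟩⟩ t
          · exact t0_add (t0_pair rfl rfl) t0_zero
          · intro e hee
            rcases Multiset.mem_add.1 hee with hP | hP
            · rcases (by simpa using hP : e = finE M q Q' ∨ e = tokE M Q') with rfl | rfl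
              · simp only [finE_src, wSt, uSt]; omega
              · simp only [tok_src, aSt, uSt]; omega
            · simp at hP
        · refine Inv.dC _ _ _ _ ⟨?_, Or.inl ⟨Or.inr ⟨Encodable.encode q, Or.inr (Or.inl rfl)⟩,
            ?_⟩⟩ t
          · exact t0_add (t0_pair rfl rfl) t0_zero
          · intro e hee
            rcases Multiset.mem_add.1 hee with hP | hP
            · rcases (by simpa using hP : e = finE M q Q'' ∨ e = tokE M Q'') with rfl | rfl
              · simp only [finE_src, wSt, uSt]; omega
              · simp only [tok_src, aSt, uSt]; omega
            · simp at hP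
    · simp at hsig
    · exfalso
      rcases hd with ⟨hn, hsc⟩ | ⟨hdb, rfl⟩
      · exact hsc e he hsrc
      · simp at he
    · rw [tickDown_zero ht]
      refine Inv.dA _ 0 ⟨t0_zero, ?_⟩ (t + 1)
      rcases hd with ⟨hn, -⟩ | ⟨hdb, -⟩
      · exact Or.inl ⟨hn, by simp⟩
      · exact Or.inr ⟨hdb, rfl⟩
  | dC S T Bo Ψ h t =>
    rcases step_cases' hs with ⟨hsg, -⟩ | ⟨Bo', T', hsig, rfl⟩ | ⟨hsg, -⟩ | ⟨hsg, -⟩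
    · simp at hsg
    · injection hsig with h1' h2'; subst h1'; subst h2'
      exact Inv.dA T (Bo + Ψ) h t
    · simp at hsg
    · simp at hsg

end Enc

namespace Enc

variable (M : Minsky)

lemma mk_eq {S S' : ℕ} {σ σ' : Sig} {P P' : Multiset Ev} {t : ℕ}
    (h1 : S = S') (h2 : σ = σ') (h3 : P = P') :
    (⟨S, σ, P, t⟩ : Config) = ⟨S', σ', P', t⟩ := by
  subst h1; subst h2; subst h3; rfl

lemma head_eq {r : Config → Config → Prop} {a b b' c : Config}
    (h : r a b) (hbe : b = b') (h' : Relation.ReflTransGen r b' c) :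
    Relation.ReflTransGen r a c := by
  subst hbe; exact h'.head h

lemma nored_c1 {Q w₁ w₂ : ℕ} (hQB : Q < B M) :
    nored (Kv M w₁ w₂ + {tokE M Q}) Q := by
  intro e he _
  rcases Multiset.mem_add.1 he with hK | hT
  · rcases (mem_Kv M).1 hK with ⟨-, rfl⟩ | ⟨-, rfl⟩ <;>
      [have := decS_lt M false; have := decS_lt M true] <;>
      simp only [cnt_src] <;> omega
  · rw [Multiset.mem_singleton] at hT; subst hT
    simp only [tok_src, aSt]; omega

lemma nored_c5 {Q w₁ w₂ : ℕ} {p : ℕ × MInstr} :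
    nored (Kv M w₁ w₂ + {hEv M p}) (bSt M Q) := by
  intro e he _
  rcases Multiset.mem_add.1 he with hK | hT
  · rcases (mem_Kv M).1 hK with ⟨-, rfl⟩ | ⟨-, rfl⟩ <;>
      [have := decS_lt M false; have := decS_lt M true] <;>
      simp only [cnt_src, bSt] <;> omega
  · rw [Multiset.mem_singleton] at hT; subst hT
    simp only [hEv_src, uSt, bSt]; omega

lemma nored_c10z {w₁ w₂ : ℕ} {r : Bool} {p : ℕ × MInstr} (hz : cond r w₂ w₁ = 0) :
    nored (Kv M w₁ w₂ + {hEv M p}) (decS M r) := by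
  intro e he _
  rcases Multiset.mem_add.1 he with hK | hT
  · have h1 := decS_lt M false
    have h2 := decS_lt M true
    have h3 := decS_lt M r
    rcases (mem_Kv M).1 hK with ⟨hw, rfl⟩ | ⟨hw, rfl⟩ <;> simp only [cnt_src] <;>
      intro hcon <;> cases r <;> simp only [cond] at hz <;> first
      | exact hw hz
      | (have := decS_inj M hcon; simp_all)
  · rw [Multiset.mem_singleton] at hT; subst hT
    have := decS_lt M r
    simp only [hEv_src, uSt]; omega

lemma nored_c17 {w₁ w₂ : ℕ} {r : Bool} {p : ℕ × MInstr} :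
    nored (Kv M w₁ w₂ + {hEv M p}) (ackS M r) := by
  intro e he _
  have h3 := ackS_lt M r
  rcases Multiset.mem_add.1 he with hK | hT
  · rcases (mem_Kv M).1 hK with ⟨-, rfl⟩ | ⟨-, rfl⟩ <;>
      [have := decS_lt M false; have := decS_lt M true] <;>
      simp only [cnt_src] <;> omega
  · rw [Multiset.mem_singleton] at hT; subst hT
    simp only [hEv_src, uSt]; omega

lemma FD_mem_funcsOf (p : ℕ × MInstr) : FD M p ∈ funcsOf M p := by
  rcases p with ⟨a, b⟩
  cases b <;> simp [funcsOf]

lemma FD_mem_funs {p : ℕ × MInstr} (hp : p ∈ M.prog) : FD M p ∈ (enc M).funs :=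
  (mem_enc_funs M).2 (Or.inr ⟨p, hp, FD_mem_funcsOf M p⟩)

/-- From a machine configuration to the corresponding `b` state, consuming the token
and scheduling the guard event of instruction `p`. -/
lemma sim_prefix (hWF : M.WF) {p : ℕ × MInstr} (hp : p ∈ M.prog) (w₁ w₂ t : ℕ) :
    Relation.ReflTransGen (Step (enc M))
      ⟨p.1, Sig.none, Kv M w₁ w₂ + {tokE M p.1}, t⟩
      ⟨bSt M p.1, Sig.none, Kv M w₁ w₂ + {hEv M p}, t⟩ := by
  have hQB : p.1 < B M := lt_B_of_mem M ((hWF.2.2.2 p hp).1)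
  refine head_eq (Step.func (FD M p) (FD_mem_funs M hp) (nored_c1 M hQB)) rfl ?_
  refine head_eq Step.stateChange (mk_eq rfl rfl
    (show bodyEvents [hEv M p] + (Kv M w₁ w₂ + {tokE M p.1})
      = Kv M w₁ w₂ + {tokE M p.1} + {hEv M p} by
        rw [show bodyEvents [hEv M p] = {hEv M p} from rfl]; abel)) ?_
  refine head_eq (Step.eventMatch (tokE M p.1) (by simp) rfl rfl) rfl ?_
  exact head_eq Step.stateChange (mk_eq rfl rfl
    (show 0 + (Kv M w₁ w₂ + {tokE M p.1} + {hEv M p}).erase (tokE M p.1)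
      = Kv M w₁ w₂ + {hEv M p} by rw [zero_add, erase_mid])) Relation.ReflTransGen.refl

lemma sim_inc (hWF : M.WF) {Q : ℕ} {r : Bool} {Q' : ℕ}
    (hp : (Q, MInstr.inc r Q') ∈ M.prog) (w₁ w₂ t : ℕ) :
    Relation.ReflTransGen (Step (enc M))
      ⟨Q, Sig.none, Kv M w₁ w₂ + {tokE M Q}, t⟩
      ⟨Q', Sig.none, Kv M (w₁ + cond r 0 1) (w₂ + cond r 1 0) + {tokE M Q'}, t⟩ := by
  set p : ℕ × MInstr := (Q, MInstr.inc r Q') with hpdef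
  refine (sim_prefix M hWF hp w₁ w₂ t).trans ?_
  have hG : (⟨bSt M Q, 0, [cntE M r, tokE M Q'], uSt M p⟩ : FunDecl) ∈ (enc M).funs :=
    (mem_enc_funs M).2 (Or.inr ⟨p, hp, by rw [hpdef]; simp [funcsOf]⟩)
  refine head_eq (Step.func _ hG (nored_c5 M)) rfl ?_
  refine head_eq Step.stateChange (mk_eq rfl rfl
    (show bodyEvents [cntE M r, tokE M Q'] + (Kv M w₁ w₂ + {hEv M p})
      = Kv M w₁ w₂ + {hEv M p} + {cntE M r, tokE M Q'} by
        rw [show bodyEvents [cntE M r, tokE M Q'] = {cntE M r, tokE M Q'} from rfl]; abel)) ?_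
  refine head_eq (Step.eventMatch (hEv M p) (by simp) rfl rfl) rfl ?_
  exact head_eq Step.stateChange (mk_eq rfl rfl
    (show 0 + (Kv M w₁ w₂ + {hEv M p} + {cntE M r, tokE M Q'}).erase (hEv M p)
      = Kv M (w₁ + cond r 0 1) (w₂ + cond r 1 0) + {tokE M Q'} by
        rw [zero_add, erase_mid, Kv_pair])) Relation.ReflTransGen.refl

lemma sim_jz (hWF : M.WF) {Q : ℕ} {r : Bool} {Q' Q'' : ℕ}
    (hp : (Q, MInstr.decjump r Q' Q'') ∈ M.prog) {w₁ w₂ : ℕ} (hz : cond r w₂ w₁ = 0)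
    (t : ℕ) :
    Relation.ReflTransGen (Step (enc M))
      ⟨Q, Sig.none, Kv M w₁ w₂ + {tokE M Q}, t⟩
      ⟨Q', Sig.none, Kv M w₁ w₂ + {tokE M Q'}, t⟩ := by
  set p : ℕ × MInstr := (Q, MInstr.decjump r Q' Q'') with hpdef
  refine (sim_prefix M hWF hp w₁ w₂ t).trans ?_
  have hD : (⟨bSt M Q, 0, [], decS M r⟩ : FunDecl) ∈ (enc M).funs :=
    (mem_enc_funs M).2 (Or.inr ⟨p, hp, by rw [hpdef]; simp [funcsOf]⟩)
  refine head_eq (Step.func _ hD (nored_c5 M)) rfl ?_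
  refine head_eq Step.stateChange (mk_eq rfl rfl
    (show bodyEvents [] + (Kv M w₁ w₂ + {hEv M p}) = Kv M w₁ w₂ + {hEv M p} by
      rw [show bodyEvents [] = 0 from rfl, zero_add])) ?_
  have hZ : (⟨decS M r, 0, [finE M p Q', tokE M Q'], uSt M p⟩ : FunDecl) ∈ (enc M).funs :=
    (mem_enc_funs M).2 (Or.inr ⟨p, hp, by rw [hpdef]; simp [funcsOf]⟩)
  refine head_eq (Step.func _ hZ (nored_c10z M hz)) rfl ?_
  refine head_eq Step.stateChange (mk_eq rfl rfl
    (show bodyEvents [finE M p Q', tokE M Q'] + (Kv M w₁ w₂ + {hEv M p})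
      = Kv M w₁ w₂ + {hEv M p} + {finE M p Q', tokE M Q'} by
        rw [show bodyEvents [finE M p Q', tokE M Q'] = {finE M p Q', tokE M Q'} from rfl]
        abel)) ?_
  refine head_eq (Step.eventMatch (hEv M p) (by simp) rfl rfl) rfl ?_
  refine head_eq Step.stateChange (mk_eq rfl rfl
    (show 0 + (Kv M w₁ w₂ + {hEv M p} + {finE M p Q', tokE M Q'}).erase (hEv M p)
      = Kv M w₁ w₂ + {finE M p Q', tokE M Q'} by rw [zero_add, erase_mid])) ?_
  refine head_eq (Step.eventMatch (finE M p Q') (by simp) rfl rfl) rfl ?_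
  exact head_eq Step.stateChange (mk_eq rfl rfl
    (show 0 + (Kv M w₁ w₂ + {finE M p Q', tokE M Q'}).erase (finE M p Q')
      = Kv M w₁ w₂ + {tokE M Q'} by rw [zero_add, erase_pair₁])) Relation.ReflTransGen.refl

lemma sim_dec (hWF : M.WF) {Q : ℕ} {r : Bool} {Q' Q'' : ℕ}
    (hp : (Q, MInstr.decjump r Q' Q'') ∈ M.prog) (w₁ w₂ t : ℕ) :
    Relation.ReflTransGen (Step (enc M))
      ⟨Q, Sig.none, Kv M (w₁ + cond r 0 1) (w₂ + cond r 1 0) + {tokE M Q}, t⟩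
      ⟨Q'', Sig.none, Kv M w₁ w₂ + {tokE M Q''}, t⟩ := by
  set p : ℕ × MInstr := (Q, MInstr.decjump r Q' Q'') with hpdef
  refine (sim_prefix M hWF hp _ _ t).trans ?_
  have hD : (⟨bSt M Q, 0, [], decS M r⟩ : FunDecl) ∈ (enc M).funs :=
    (mem_enc_funs M).2 (Or.inr ⟨p, hp, by rw [hpdef]; simp [funcsOf]⟩)
  refine head_eq (Step.func _ hD (nored_c5 M)) rfl ?_
  refine head_eq Step.stateChange (mk_eq rfl rfl
    (show bodyEvents [] + (Kv M (w₁ + cond r 0 1) (w₂ + cond r 1 0) + {hEv M p})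
      = Kv M (w₁ + cond r 0 1) (w₂ + cond r 1 0) + {hEv M p} by
        rw [show bodyEvents [] = 0 from rfl, zero_add])) ?_
  have hcm : cntE M r ∈ Kv M (w₁ + cond r 0 1) (w₂ + cond r 1 0) := by
    apply cnt_mem_Kv
    cases r <;> simp
  refine head_eq (Step.eventMatch (cntE M r) (Multiset.mem_add.2 (Or.inl hcm)) rfl rfl) rfl ?_
  refine head_eq Step.stateChange (mk_eq rfl rfl
    (show 0 + ((Kv M (w₁ + cond r 0 1) (w₂ + cond r 1 0) + {hEv M p}).erase (cntE M r))
      = Kv M w₁ w₂ + {hEv M p} by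
        rw [zero_add, Multiset.erase_add_left_pos _ hcm, Kv_succ, erase_right])) ?_
  have hN : (⟨ackS M r, 0, [finE M p Q'', tokE M Q''], uSt M p⟩ : FunDecl) ∈ (enc M).funs :=
    (mem_enc_funs M).2 (Or.inr ⟨p, hp, by rw [hpdef]; simp [funcsOf]⟩)
  refine head_eq (Step.func _ hN (nored_c17 M)) rfl ?_
  refine head_eq Step.stateChange (mk_eq rfl rfl
    (show bodyEvents [finE M p Q'', tokE M Q''] + (Kv M w₁ w₂ + {hEv M p})
      = Kv M w₁ w₂ + {hEv M p} + {finE M p Q'', tokE M Q''} by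
        rw [show bodyEvents [finE M p Q'', tokE M Q''] = {finE M p Q'', tokE M Q''} from rfl]
        abel)) ?_
  refine head_eq (Step.eventMatch (hEv M p) (by simp) rfl rfl) rfl ?_
  refine head_eq Step.stateChange (mk_eq rfl rfl
    (show 0 + (Kv M w₁ w₂ + {hEv M p} + {finE M p Q'', tokE M Q''}).erase (hEv M p)
      = Kv M w₁ w₂ + {finE M p Q'', tokE M Q''} by rw [zero_add, erase_mid])) ?_
  refine head_eq (Step.eventMatch (finE M p Q'') (by simp) rfl rfl) rfl ?_
  exact head_eq Step.stateChange (mk_eq rfl rfl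
    (show 0 + (Kv M w₁ w₂ + {finE M p Q'', tokE M Q''}).erase (finE M p Q'')
      = Kv M w₁ w₂ + {tokE M Q''} by rw [zero_add, erase_pair₁])) Relation.ReflTransGen.refl

/-- Single machine step simulation. -/
lemma sim_step (hWF : M.WF) {Qa Qb w₁ w₂ w₁' w₂' : ℕ}
    (h : MStep M (Qa, w₁, w₂) (Qb, w₁', w₂')) (t : ℕ) :
    Relation.ReflTransGen (Step (enc M))
      ⟨Qa, Sig.none, Kv M w₁ w₂ + {tokE M Qa}, t⟩
      ⟨Qb, Sig.none, Kv M w₁' w₂' + {tokE M Qb}, t⟩ := by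
  cases h with
  | inc₁ hp => exact sim_inc M hWF hp _ _ t
  | inc₂ hp => exact sim_inc M hWF hp _ _ t
  | jz₁ hp => exact sim_jz M hWF hp rfl t
  | dec₁ hp => exact sim_dec M hWF hp _ _ t
  | jz₂ hp => exact sim_jz M hWF hp rfl t
  | dec₂ hp => exact sim_dec M hWF hp _ _ t

/-- Multi-step machine simulation. -/
lemma sim_rtg (hWF : M.WF) {x y : ℕ × ℕ × ℕ}
    (h : Relation.ReflTransGen (MStep M) x y) (t : ℕ) :
    Relation.ReflTransGen (Step (enc M))
      ⟨x.1, Sig.none, Kv M x.2.1 x.2.2 + {tokE M x.1}, t⟩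
      ⟨y.1, Sig.none, Kv M y.2.1 y.2.2 + {tokE M y.1}, t⟩ := by
  induction h with
  | refl => exact Relation.ReflTransGen.refl
  | tail hab hbc ih =>
    rename_i b c
    refine ih.trans ?_
    rcases b with ⟨Qb, wb₁, wb₂⟩
    rcases c with ⟨Qc, wc₁, wc₂⟩
    exact sim_step M hWF hbc t

/-- The initial path: from the contract's initial configuration to the machine's
initial configuration. -/
lemma sim_init (hWF : M.WF) (t : ℕ) :
    Relation.ReflTransGen (Step (enc M))
      ⟨s0 M, Sig.none, 0, t⟩
      ⟨M.init, Sig.none, Kv M 0 0 + {tokE M M.init}, t⟩ := by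
  have hI : initFun M ∈ (enc M).funs := (mem_enc_funs M).2 (Or.inl rfl)
  refine head_eq (Step.func (initFun M) hI (by intro e he; simp at he)) rfl ?_
  refine head_eq Step.stateChange (mk_eq rfl rfl
    (show bodyEvents [initEv M, tokE M M.init] + 0
      = ({initEv M, tokE M M.init} : Multiset Ev) by rw [add_zero]; rfl)) ?_
  refine head_eq (Step.eventMatch (initEv M) (by simp) rfl rfl) rfl ?_
  exact head_eq Step.stateChange (mk_eq rfl rfl
    (show 0 + ({initEv M, tokE M M.init} : Multiset Ev).erase (initEv M)
      = Kv M 0 0 + {tokE M M.init} by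
        rw [zero_add, show ({initEv M, tokE M M.init} : Multiset Ev).erase (initEv M)
            = {tokE M M.init} by rw [Multiset.insert_eq_cons, Multiset.erase_cons_head],
          show (Kv M 0 0 : Multiset Ev) = 0 from rfl, zero_add])) Relation.ReflTransGen.refl

lemma inv_reach {Qi v₁ v₂ : ℕ} (hWF : M.WF) (hQi : Qi ∈ M.states) {c c' : Config}
    (h : Relation.ReflTransGen (Step (enc M)) c c') (hc : Inv M Qi v₁ v₂ c) :
    Inv M Qi v₁ v₂ c' := by
  induction h with
  | refl => exact hc
  | tail _ hstep ih => exact inv_step hWF hQi ih hstep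

/-- Analysis of invariant configurations with `Sig.none` at a machine state. -/
lemma inv_none_machine {Qi v₁ v₂ : ℕ} {S : ℕ} {Ψ : Multiset Ev} {t : ℕ}
    (h : Inv M Qi v₁ v₂ ⟨S, Sig.none, Ψ, t⟩) (hS : S ∈ M.states) :
    ∃ w₁ w₂, RM M Qi v₁ v₂ S w₁ w₂ := by
  have hSB : S < B M := lt_B_of_mem M hS
  generalize hgen : (⟨S, Sig.none, Ψ, t⟩ : Config) = c at h
  cases h <;> rw [Config.mk.injEq] at hgen <;>
    (try exact Sig.noConfusion hgen.2.1)
  case i0 hR _ =>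
    exfalso; rw [hgen.1] at hSB; simp only [s0] at hSB; omega
  case i2 hR _ =>
    exfalso; rw [hgen.1] at hSB; simp only [w0] at hSB; omega
  case c1 Q w₁ w₂ hR _ =>
    exact ⟨w₁, w₂, by rw [hgen.1]; exact hR⟩
  case c3 Q w₁ w₂ p hR hp h1 _ =>
    exfalso; rw [hgen.1] at hSB; simp only [aSt] at hSB; omega
  case c5 Q w₁ w₂ p hR hp h1 _ =>
    exfalso; rw [hgen.1] at hSB; simp only [bSt] at hSB; omega
  case c7 Q w₁ w₂ p q r Q' hR hp h1 hq hq2 _ =>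
    exfalso; rw [hgen.1] at hSB; simp only [uSt] at hSB; omega
  case c10 Q w₁ w₂ p r hR hp h1 _ =>
    exfalso; have := decS_lt M r; rw [hgen.1] at hSB; omega
  case c13 Q w₁ w₂ p r Q' Q'' hR hp hp2 hz _ =>
    exfalso; rw [hgen.1] at hSB; simp only [uSt] at hSB; omega
  case c15 Q w₁ w₂ p r Q' Q'' hR hp hp2 hz _ =>
    exfalso; rw [hgen.1] at hSB; simp only [wSt] at hSB; omega
  case c17 Q w₁ w₂ p r hR hp h1 _ =>
    exfalso; have := ackS_lt M r; rw [hgen.1] at hSB; omega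
  case c19 Q w₁ w₂ p r Q' Q'' hR hp hp2 _ =>
    exfalso; rw [hgen.1] at hSB; simp only [uSt] at hSB; omega
  case c21 Q w₁ w₂ p r Q' Q'' hR hp hp2 _ =>
    exfalso; rw [hgen.1] at hSB; simp only [wSt] at hSB; omega
  case dQ Q w₁ w₂ hR _ =>
    exact ⟨w₁, w₂, by rw [hgen.1]; exact hR⟩
  case dA S' Ψ' hdead _ =>
    exfalso
    rw [hgen.1] at hSB
    rcases hdead.2 with ⟨hn, -⟩ | ⟨hdb, -⟩
    · have hw0 : w0 M = B M + 1 := rfl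
      rcases hn with hw | ⟨k, hk | hk | hk⟩ <;> omega
    · rcases hdb with hk | hk | hk | hk | ⟨k, hk⟩ <;> omega

end Enc

namespace Enc

variable (M : Minsky)

/-- Entry analysis: a step from a non-machine state into a machine state. -/
lemma inv_entry {Qi v₁ v₂ : ℕ} (hWF : M.WF) (hQi : Qi ∈ M.states)
    {c : Config} {Qj : ℕ} {S' : Sig} {Ψ' : Multiset Ev} {t₂ : ℕ}
    (hI : Inv M Qi v₁ v₂ c) (hs : Step (enc M) c ⟨Qj, S', Ψ', t₂⟩)
    (hc : c.state ∉ M.states) (hj : Qj ∈ M.states) :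
    S' = Sig.none ∧ ∃ w₁ w₂, Ψ' = Kv M w₁ w₂ + {tokE M Qj} ∧
      RM M Qi v₁ v₂ Qj w₁ w₂ := by
  have hjB : Qj < B M := lt_B_of_mem M hj
  cases hI <;>
    rcases step_cases' hs with ⟨hsg, f, hf, hsrc, hnor, heq⟩ | ⟨Bo, T, hsig, heq⟩ |
      ⟨hsg, e, he, he0, hsrc, heq⟩ | ⟨hsg, hnor, heq⟩ <;>
    (try exact Sig.noConfusion hsg) <;>
    (try exact Sig.noConfusion hsig) <;>
    (try (rw [Config.mk.injEq] at heq; rw [heq.1] at hj; exact absurd hj hc)) <;>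
    (injection hsig with hsig1 hsig2; subst hsig1; subst hsig2;
      rw [Config.mk.injEq] at heq)
  case i1 hR t =>
    exfalso; rw [heq.1] at hjB; simp only [w0] at hjB; omega
  case i3 hR t =>
    obtain ⟨h1, h2, h3, -⟩ := heq
    subst h1
    refine ⟨h2, 0, 0, ?_, hR⟩
    rw [h3, zero_add, show (Kv M 0 0 : Multiset Ev) = 0 from rfl, zero_add]
  case c2 Q w₁ w₂ p hR hp h1 t =>
    exfalso; rw [heq.1] at hjB; simp only [aSt] at hjB; omega
  case c4 Q w₁ w₂ p hR hp h1 t =>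
    exfalso; rw [heq.1] at hjB; simp only [bSt] at hjB; omega
  case c6 Q w₁ w₂ p q r Q' hR hp h1 hq hq2 t =>
    exfalso; rw [heq.1] at hjB; simp only [uSt] at hjB; omega
  case c8 Q w₁ w₂ q r Q' hR hq hq2 t =>
    obtain ⟨h1, h2, h3, -⟩ := heq
    subst h1
    refine ⟨h2, w₁ + cond r 0 1, w₂ + cond r 1 0, ?_, hR.tail ?_⟩
    · rw [h3, zero_add, Kv_pair]
    · cases r
      · exact MStep.inc₁ (hq2 ▸ hq)
      · exact MStep.inc₂ (hq2 ▸ hq)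
  case c9 Q w₁ w₂ p r hR hp h1 t =>
    exfalso; have := decS_lt M r; rw [heq.1] at hjB; omega
  case c11 Q w₁ w₂ p r hR hp h1 t =>
    exfalso; have := ackS_lt M r; rw [heq.1] at hjB; omega
  case c12 Q w₁ w₂ p q r Q' Q'' hR hp h1 hq hq2 hz t =>
    exfalso; rw [heq.1] at hjB; simp only [uSt] at hjB; omega
  case c14 Q w₁ w₂ p r Q' Q'' hR hp hp2 hz t =>
    exfalso; rw [heq.1] at hjB; simp only [wSt] at hjB; omega
  case c16 Q w₁ w₂ p r Q' Q'' hR hp hp2 hz t =>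
    obtain ⟨h1, h2, h3, -⟩ := heq
    subst h1
    refine ⟨h2, w₁, w₂, ?_, hR.tail ?_⟩
    · rw [h3, zero_add]
    · cases r
      · simp only [cond] at hz; subst hz
        exact MStep.jz₁ (hp2 ▸ hp)
      · simp only [cond] at hz; subst hz
        exact MStep.jz₂ (hp2 ▸ hp)
  case c18 Q w₁ w₂ p q r Q' Q'' hR hp h1 hq hq2 t =>
    exfalso; rw [heq.1] at hjB; simp only [uSt] at hjB; omega
  case c20 Q w₁ w₂ p r Q' Q'' hR hp hp2 t =>
    exfalso; rw [heq.1] at hjB; simp only [wSt] at hjB; omega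
  case c22 Q w₁ w₂ p r Q' Q'' hR hp hp2 t =>
    obtain ⟨h1, h2, h3, -⟩ := heq
    subst h1
    refine ⟨h2, w₁, w₂, ?_, hR.tail ?_⟩
    · rw [h3, zero_add]
    · cases r
      · exact MStep.dec₁ (hp2 ▸ hp)
      · exact MStep.dec₂ (hp2 ▸ hp)
  case dQc Q w₁ w₂ p hR hp h1 t =>
    exfalso; rw [heq.1] at hjB; simp only [aSt] at hjB; omega
  case dC S T' Bo' Ψ'' hdead t =>
    exfalso
    rw [heq.1] at hjB
    rcases hdead.2 with ⟨hn, -⟩ | ⟨hdb, -⟩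
    · have hw0 : w0 M = B M + 1 := rfl
      rcases hn with hw | ⟨k, hk | hk | hk⟩ <;> omega
    · rcases hdb with hk | hk | hk | hk | ⟨k, hk⟩ <;> omega

/-- Membership in the states list. -/
lemma machine_mem_states {q : ℕ} (h : q ∈ M.states) : q ∈ (enc M).states := by
  simp [enc, h]

lemma ab_mem_states {Q : ℕ} (h : Q ∈ M.states) :
    aSt M Q ∈ (enc M).states ∧ bSt M Q ∈ (enc M).states := by
  constructor <;> · simp only [enc, List.mem_append, List.mem_flatMap]
                    exact Or.inr (Or.inl (Or.inr ⟨Q, h, by simp⟩))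

lemma uw_mem_states {p : ℕ × MInstr} (h : p ∈ M.prog) :
    uSt M p ∈ (enc M).states ∧ wSt M p ∈ (enc M).states := by
  constructor <;> · simp only [enc, List.mem_append, List.mem_flatMap]
                    exact Or.inr (Or.inr ⟨p, h, by simp⟩)

lemma base_mem_states :
    s0 M ∈ (enc M).states ∧ w0 M ∈ (enc M).states ∧
    (∀ r, decS M r ∈ (enc M).states) ∧ (∀ r, ackS M r ∈ (enc M).states) := by
  refine ⟨by simp [enc], by simp [enc], fun r => ?_, fun r => ?_⟩ <;>
    cases r <;> simp [enc]

lemma enc_WF (hWF : M.WF) : (enc M).WF := by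
  obtain ⟨hs0, hw0, hdec, hack⟩ := base_mem_states M
  constructor
  · exact hs0
  intro f hf
  rcases (mem_enc_funs M).1 hf with rfl | ⟨p, hp, hfp⟩
  · refine ⟨hs0, hw0, ?_⟩
    intro e hee
    rcases (by simpa [initFun] using hee : e = initEv M ∨ e = tokE M M.init) with rfl | rfl
    · exact ⟨hw0, machine_mem_states M hWF.1⟩
    · exact ⟨(ab_mem_states M hWF.1).1, (ab_mem_states M hWF.1).2⟩
  have hp1 : p.1 ∈ M.states := (hWF.2.2.2 p hp).1
  have hp2 := (hWF.2.2.2 p hp).2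
  rcases funcsOf_cases M hfp with rfl | ⟨r, Q', hq2, rfl⟩ | ⟨r, Q', Q'', hq2, rfl | rfl | rfl⟩
  · refine ⟨machine_mem_states M hp1, (ab_mem_states M hp1).1, ?_⟩
    intro e hee
    rcases (by simpa [FD] using hee : e = hEv M p) with rfl
    refine ⟨(uw_mem_states M hp).1, ?_⟩
    rcases p with ⟨a, b⟩
    cases b with
    | inc r Q' => exact machine_mem_states M hp2
    | decjump r Q' Q'' => exact (uw_mem_states M hp).2
  · rw [hq2] at hp2
    refine ⟨(ab_mem_states M hp1).2, (uw_mem_states M hp).1, ?_⟩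
    intro e hee
    rcases (by simpa using hee : e = cntE M r ∨ e = tokE M Q') with rfl | rfl
    · exact ⟨hdec r, hack r⟩
    · exact ⟨(ab_mem_states M hp2).1, (ab_mem_states M hp2).2⟩
  · exact ⟨(ab_mem_states M hp1).2, hdec r, by intro e hee; simp at hee⟩
  · rw [hq2] at hp2
    refine ⟨hdec r, (uw_mem_states M hp).1, ?_⟩
    intro e hee
    rcases (by simpa using hee : e = finE M p Q' ∨ e = tokE M Q') with rfl | rfl
    · exact ⟨(uw_mem_states M hp).2, machine_mem_states M hp2.1⟩
    · exact ⟨(ab_mem_states M hp2.1).1, (ab_mem_states M hp2.1).2⟩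
  · rw [hq2] at hp2
    refine ⟨hack r, (uw_mem_states M hp).1, ?_⟩
    intro e hee
    rcases (by simpa using hee : e = finE M p Q'' ∨ e = tokE M Q'') with rfl | rfl
    · exact ⟨(uw_mem_states M hp).2, machine_mem_states M hp2.2⟩
    · exact ⟨(ab_mem_states M hp2.2).1, (ab_mem_states M hp2.2).2⟩

lemma enc_inst : Instantaneous (enc M) := by
  intro f hf e hee
  rcases (mem_enc_funs M).1 hf with rfl | ⟨p, hp, hfp⟩
  · rcases (by simpa [initFun] using hee : e = initEv M ∨ e = tokE M M.init) with rfl | rfl <;> rfl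
  rcases funcsOf_cases M hfp with rfl | ⟨r, Q', hq2, rfl⟩ | ⟨r, Q', Q'', hq2, rfl | rfl | rfl⟩
  · rcases (by simpa [FD] using hee : e = hEv M p) with rfl; rfl
  · rcases (by simpa using hee : e = cntE M r ∨ e = tokE M Q') with rfl | rfl <;> rfl
  · simp at hee
  · rcases (by simpa using hee : e = finE M p Q' ∨ e = tokE M Q') with rfl | rfl <;> rfl
  · rcases (by simpa using hee : e = finE M p Q'' ∨ e = tokE M Q'') with rfl | rfl <;> rfl

lemma halts_iff_reachable (hWF : M.WF) : M.Halts ↔ Reachable (enc M) M.final := by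
  constructor
  · rintro ⟨w₁, w₂, hr⟩
    exact ⟨0, 0, Kv M w₁ w₂ + {tokE M M.final},
      (sim_init M hWF 0).trans (sim_rtg M hWF hr 0)⟩
  · rintro ⟨t, t', Ψ, hr⟩
    have hInv : Inv M M.init 0 0 ⟨M.final, Sig.none, Ψ, t'⟩ :=
      inv_reach M hWF hWF.1 hr (Inv.i0 Relation.ReflTransGen.refl t)
    obtain ⟨w₁, w₂, hR⟩ := inv_none_machine M hInv hWF.2.1
    exact ⟨w₁, w₂, hR⟩

end Enc

namespace Enc

section Computability

def pcEv : Primcodable Ev := Primcodable.ofEquiv _ Ev.equivProd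
attribute [local instance] pcEv
def pcFun : Primcodable FunDecl := Primcodable.ofEquiv _ FunDecl.equivProd
attribute [local instance] pcFun
def pcContract : Primcodable Contract := Primcodable.ofEquiv _ Contract.equivProd
attribute [local instance] pcContract
def pcMInstr : Primcodable MInstr := Primcodable.ofEquiv _ MInstr.equivSum
attribute [local instance] pcMInstr
def pcMinsky : Primcodable Minsky := Primcodable.ofEquiv _ Minsky.equivProd
attribute [local instance] pcMinsky

open Primrec

private lemma prim_sum : Primrec (List.sum : List ℕ → ℕ) := by
  have h : Primrec fun l : List ℕ => l.foldr (fun b s => b + s) 0 :=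
    Primrec.list_foldr Primrec.id (const 0)
      (nat_add.comp (fst.comp snd) (snd.comp snd)).to₂
  exact h.of_eq fun l => by induction l with
    | nil => rfl
    | cons a l ih => simp [List.foldr, ih]

private lemma prim_states : Primrec Minsky.states :=
  fst.comp (Primrec.of_equiv (e := Minsky.equivProd))

private lemma prim_minit : Primrec Minsky.init :=
  fst.comp (snd.comp (Primrec.of_equiv (e := Minsky.equivProd)))

private lemma prim_prog : Primrec Minsky.prog :=
  snd.comp (snd.comp (snd.comp (Primrec.of_equiv (e := Minsky.equivProd))))

private lemma prim_B : Primrec Enc.B :=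
  nat_add.comp (prim_sum.comp prim_states) (const 1)

variable {α : Type} [Primcodable α]

private lemma prim_mkEv {f g h k : α → ℕ} (hf : Primrec f) (hg : Primrec g)
    (hh : Primrec h) (hk : Primrec k) :
    Primrec fun a => (⟨f a, g a, h a, k a⟩ : Ev) :=
  (Primrec.of_equiv_symm (e := Ev.equivProd)).comp (hf.pair (hg.pair (hh.pair hk)))

private lemma prim_mkFun {f : α → ℕ} {g : α → ℕ} {h : α → List Ev} {k : α → ℕ}
    (hf : Primrec f) (hg : Primrec g) (hh : Primrec h) (hk : Primrec k) :
    Primrec fun a => (⟨f a, g a, h a, k a⟩ : FunDecl) :=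
  (Primrec.of_equiv_symm (e := FunDecl.equivProd)).comp (hf.pair (hg.pair (hh.pair hk)))

private lemma prim_mkC {f : α → List ℕ} {g : α → ℕ} {h : α → List FunDecl}
    (hf : Primrec f) (hg : Primrec g) (hh : Primrec h) :
    Primrec fun a => (⟨f a, g a, h a⟩ : Contract) :=
  (Primrec.of_equiv_symm (e := Contract.equivProd)).comp (hf.pair (hg.pair hh))

private lemma prim_decS {f : α → Minsky} {g : α → Bool} (hf : Primrec f)
    (hg : Primrec g) : Primrec fun a => decS (f a) (g a) :=
  nat_add.comp (nat_add.comp (prim_B.comp hf) (const 2))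
    (Primrec.cond hg (const 1) (const 0))

private lemma prim_ackS {f : α → Minsky} {g : α → Bool} (hf : Primrec f)
    (hg : Primrec g) : Primrec fun a => ackS (f a) (g a) :=
  nat_add.comp (nat_add.comp (prim_B.comp hf) (const 4))
    (Primrec.cond hg (const 1) (const 0))

private lemma prim_aSt {f : α → Minsky} {g : α → ℕ} (hf : Primrec f)
    (hg : Primrec g) : Primrec fun a => aSt (f a) (g a) :=
  nat_add.comp (nat_add.comp (prim_B.comp hf) (const 6)) (nat_mul.comp (const 5) hg)

private lemma prim_bSt {f : α → Minsky} {g : α → ℕ} (hf : Primrec f)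
    (hg : Primrec g) : Primrec fun a => bSt (f a) (g a) :=
  nat_add.comp (nat_add.comp (prim_B.comp hf) (const 7)) (nat_mul.comp (const 5) hg)

private lemma prim_uSt {f : α → Minsky} {g : α → ℕ × MInstr} (hf : Primrec f)
    (hg : Primrec g) : Primrec fun a => uSt (f a) (g a) :=
  nat_add.comp (nat_add.comp (prim_B.comp hf) (const 8))
    (nat_mul.comp (const 5) (Primrec.encode.comp hg))

private lemma prim_wSt {f : α → Minsky} {g : α → ℕ × MInstr} (hf : Primrec f)
    (hg : Primrec g) : Primrec fun a => wSt (f a) (g a) :=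
  nat_add.comp (nat_add.comp (prim_B.comp hf) (const 9))
    (nat_mul.comp (const 5) (Primrec.encode.comp hg))

private lemma prim_cntE {f : α → Minsky} {g : α → Bool} (hf : Primrec f)
    (hg : Primrec g) : Primrec fun a => cntE (f a) (g a) :=
  prim_mkEv (const 0) (const 0) (prim_decS hf hg) (prim_ackS hf hg)

private lemma prim_tokE {f : α → Minsky} {g : α → ℕ} (hf : Primrec f)
    (hg : Primrec g) : Primrec fun a => tokE (f a) (g a) :=
  prim_mkEv (const 0) (const 0) (prim_aSt hf hg) (prim_bSt hf hg)

private lemma prim_list2 {β : Type} [Primcodable β] {f g : α → β} (hf : Primrec f)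
    (hg : Primrec g) : Primrec fun a => [f a, g a] :=
  list_cons.comp hf (list_cons.comp hg (const []))

private lemma prim_funcsOf : Primrec₂ funcsOf := by
  have hM : Primrec fun x : Minsky × (ℕ × MInstr) => x.1 := fst
  have hp : Primrec fun x : Minsky × (ℕ × MInstr) => x.2 := snd
  have hp1 : Primrec fun x : Minsky × (ℕ × MInstr) => x.2.1 := fst.comp snd
  have hsum : Primrec fun x : Minsky × (ℕ × MInstr) => MInstr.equivSum x.2.2 :=
    (Primrec.of_equiv (e := MInstr.equivSum)).comp (snd.comp snd)
  -- the `inc` branch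
  have hinc : Primrec fun y : (Minsky × (ℕ × MInstr)) × (Bool × ℕ) =>
      [(⟨y.1.2.1, 0, [⟨0, 0, uSt y.1.1 y.1.2, y.2.2⟩], aSt y.1.1 y.1.2.1⟩ : FunDecl),
       ⟨bSt y.1.1 y.1.2.1, 0, [cntE y.1.1 y.2.1, tokE y.1.1 y.2.2], uSt y.1.1 y.1.2⟩] := by
    have hM' : Primrec fun y : (Minsky × (ℕ × MInstr)) × (Bool × ℕ) => y.1.1 :=
      fst.comp fst
    have hp' : Primrec fun y : (Minsky × (ℕ × MInstr)) × (Bool × ℕ) => y.1.2 :=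
      snd.comp fst
    have hp1' : Primrec fun y : (Minsky × (ℕ × MInstr)) × (Bool × ℕ) => y.1.2.1 :=
      fst.comp (snd.comp fst)
    have hr : Primrec fun y : (Minsky × (ℕ × MInstr)) × (Bool × ℕ) => y.2.1 :=
      fst.comp snd
    have hq : Primrec fun y : (Minsky × (ℕ × MInstr)) × (Bool × ℕ) => y.2.2 :=
      snd.comp snd
    exact prim_list2
      (prim_mkFun hp1' (const 0)
        (list_cons.comp (prim_mkEv (const 0) (const 0) (prim_uSt hM' hp') hq) (const []))
        (prim_aSt hM' hp1'))
      (prim_mkFun (prim_bSt hM' hp1') (const 0)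
        (prim_list2 (prim_cntE hM' hr) (prim_tokE hM' hq))
        (prim_uSt hM' hp'))
  -- the `decjump` branch
  have hdec : Primrec fun y : (Minsky × (ℕ × MInstr)) × (Bool × ℕ × ℕ) =>
      [(⟨y.1.2.1, 0, [⟨0, 0, uSt y.1.1 y.1.2, wSt y.1.1 y.1.2⟩], aSt y.1.1 y.1.2.1⟩ : FunDecl),
       ⟨bSt y.1.1 y.1.2.1, 0, [], decS y.1.1 y.2.1⟩,
       ⟨decS y.1.1 y.2.1, 0, [⟨0, 0, wSt y.1.1 y.1.2, y.2.2.1⟩, tokE y.1.1 y.2.2.1],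
         uSt y.1.1 y.1.2⟩,
       ⟨ackS y.1.1 y.2.1, 0, [⟨0, 0, wSt y.1.1 y.1.2, y.2.2.2⟩, tokE y.1.1 y.2.2.2],
         uSt y.1.1 y.1.2⟩] := by
    have hM' : Primrec fun y : (Minsky × (ℕ × MInstr)) × (Bool × ℕ × ℕ) => y.1.1 :=
      fst.comp fst
    have hp' : Primrec fun y : (Minsky × (ℕ × MInstr)) × (Bool × ℕ × ℕ) => y.1.2 :=
      snd.comp fst
    have hp1' : Primrec fun y : (Minsky × (ℕ × MInstr)) × (Bool × ℕ × ℕ) => y.1.2.1 :=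
      fst.comp (snd.comp fst)
    have hr : Primrec fun y : (Minsky × (ℕ × MInstr)) × (Bool × ℕ × ℕ) => y.2.1 :=
      fst.comp snd
    have hq1 : Primrec fun y : (Minsky × (ℕ × MInstr)) × (Bool × ℕ × ℕ) => y.2.2.1 :=
      fst.comp (snd.comp snd)
    have hq2 : Primrec fun y : (Minsky × (ℕ × MInstr)) × (Bool × ℕ × ℕ) => y.2.2.2 :=
      snd.comp (snd.comp snd)
    exact list_cons.comp
      (prim_mkFun hp1' (const 0)
        (list_cons.comp
          (prim_mkEv (const 0) (const 0) (prim_uSt hM' hp') (prim_wSt hM' hp')) (const []))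
        (prim_aSt hM' hp1'))
      (list_cons.comp
        (prim_mkFun (prim_bSt hM' hp1') (const 0) (const []) (prim_decS hM' hr))
        (prim_list2
          (prim_mkFun (prim_decS hM' hr) (const 0)
            (prim_list2 (prim_mkEv (const 0) (const 0) (prim_wSt hM' hp') hq1)
              (prim_tokE hM' hq1))
            (prim_uSt hM' hp'))
          (prim_mkFun (prim_ackS hM' hr) (const 0)
            (prim_list2 (prim_mkEv (const 0) (const 0) (prim_wSt hM' hp') hq2)
              (prim_tokE hM' hq2))
            (prim_uSt hM' hp'))))
  have hmain := Primrec.sumCasesOn hsum hinc.to₂ hdec.to₂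
  refine hmain.of_eq ?_
  rintro ⟨M, a, b⟩
  cases b <;> rfl

private lemma prim_initFun : Primrec initFun := by
  have hid : Primrec (fun M : Minsky => M) := Primrec.id
  exact prim_mkFun prim_B
    (const 0)
    (prim_list2 (prim_mkEv (const 0) (const 0)
        (nat_add.comp prim_B (const 1)) prim_minit)
      (prim_tokE hid prim_minit))
    (nat_add.comp prim_B (const 1))

private lemma prim_enc : Primrec Enc.enc := by
  have hid : Primrec (fun M : Minsky => M) := Primrec.id
  have hbase : Primrec fun M : Minsky =>
      [s0 M, w0 M, decS M false, decS M true, ackS M false, ackS M true] :=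
    list_cons.comp prim_B
      (list_cons.comp (nat_add.comp prim_B (const 1))
        (list_cons.comp (prim_decS hid (const false))
          (list_cons.comp (prim_decS hid (const true))
            (list_cons.comp (prim_ackS hid (const false))
              (list_cons.comp (prim_ackS hid (const true)) (const []))))))
  have hflat1 : Primrec fun M : Minsky => M.states.flatMap (fun Q => [aSt M Q, bSt M Q]) :=
    Primrec.list_flatMap prim_states
      (prim_list2 (prim_aSt fst snd) (prim_bSt fst snd)).to₂
  have hflat2 : Primrec fun M : Minsky => M.prog.flatMap (fun p => [uSt M p, wSt M p]) :=
    Primrec.list_flatMap prim_prog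
      (prim_list2 (prim_uSt fst snd) (prim_wSt fst snd)).to₂
  have hstatesL : Primrec fun M : Minsky =>
      M.states ++ ([s0 M, w0 M, decS M false, decS M true, ackS M false, ackS M true]
        ++ M.states.flatMap (fun Q => [aSt M Q, bSt M Q])
        ++ M.prog.flatMap (fun p => [uSt M p, wSt M p])) :=
    list_append.comp prim_states
      (list_append.comp (list_append.comp hbase hflat1) hflat2)
  have hfuns : Primrec fun M : Minsky => initFun M :: M.prog.flatMap (funcsOf M) :=
    list_cons.comp prim_initFun
      (Primrec.list_flatMap prim_prog prim_funcsOf)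
  exact prim_mkC hstatesL prim_B hfuns

lemma computable_exists :
    ∃ F : ℕ → ℕ, Computable F ∧
      ∀ M : Minsky, F (Encodable.encode M) = Encodable.encode (Enc.enc M) := by
  classical
  refine ⟨fun n => (Encodable.decode (α := Minsky) n).casesOn 0
    (fun M => Encodable.encode (Enc.enc M)), ?_, ?_⟩
  · apply Primrec.to_comp
    exact Primrec.option_casesOn Primrec.decode (const 0)
      ((Primrec.encode.comp (prim_enc.comp snd)) : Primrec
        fun p : ℕ × Minsky => Encodable.encode (Enc.enc p.2))
  · intro M
    simp [Encodable.encodek]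

end Computability

end Enc
/-- There is a computable map taking each Minsky machine `M` to a
μStipula^I contract `I_M` whose states include those of `M`, with events `e₁ = (0 ≫ dec₁
⇒ ackdec₁)`, `e₂ = (0 ≫ dec₂ ⇒ ackdec₂)` and, for each machine state `Q`, an event
`e₃ Q = (0 ≫ aQ ⇒ bQ)`, such that, writing `⟦v₁,v₂⟧_Q = msem e₁ e₂ e₃ M Q v₁ v₂`:
(0) the initial configuration of `I_M` reaches `I_M(Q₀, −, ⟦0,0⟧_{Q₀})`;
(1) machine transitions are simulated; (2) `I_M` does not transit to unreachable Minsky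
states; consequently `M` halts iff `Q_F` is reachable in `I_M`. -/
theorem minsky_encoding_instantaneous :
    ∃ (enc : Minsky → Contract) (e₁ e₂ : Minsky → Ev) (e₃ : Minsky → ℕ → Ev),
      (∃ F : ℕ → ℕ, Computable F ∧
        ∀ M : Minsky, F (Encodable.encode M) = Encodable.encode (enc M)) ∧
      ∀ M : Minsky, M.WF →
        (enc M).WF ∧ Instantaneous (enc M) ∧
        (∀ q ∈ M.states, q ∈ (enc M).states) ∧
        (e₁ M).time = 0 ∧ (e₂ M).time = 0 ∧ (∀ Q, (e₃ M Q).time = 0) ∧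
        -- (0)
        (∃ t t', Relation.ReflTransGen (Step (enc M))
            ⟨(enc M).init, Sig.none, 0, t⟩
            ⟨M.init, Sig.none, msem e₁ e₂ e₃ M M.init 0 0, t'⟩) ∧
        -- (1)
        (∀ Qi Qj v₁ v₂ v₁' v₂', MStep M (Qi, v₁, v₂) (Qj, v₁', v₂') →
          ∀ t, ∃ t', Relation.ReflTransGen (Step (enc M))
            ⟨Qi, Sig.none, msem e₁ e₂ e₃ M Qi v₁ v₂, t⟩
            ⟨Qj, Sig.none, msem e₁ e₂ e₃ M Qj v₁' v₂', t'⟩) ∧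
        -- (2)
        (∀ (Qi v₁ v₂ t : ℕ) (c : Config) (Qj : ℕ) (S' : Sig) (Ψ' : Multiset Ev) (t₂ : ℕ),
          Qi ∈ M.states →
          Relation.ReflTransGen (Step (enc M))
            ⟨Qi, Sig.none, msem e₁ e₂ e₃ M Qi v₁ v₂, t⟩ c →
          Step (enc M) c ⟨Qj, S', Ψ', t₂⟩ →
          c.state ∉ M.states → Qj ∈ M.states →
          S' = Sig.none ∧ ∃ v₁' v₂', Ψ' = msem e₁ e₂ e₃ M Qj v₁' v₂' ∧
            Relation.ReflTransGen (MStep M) (Qi, v₁, v₂) (Qj, v₁', v₂')) ∧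
        (M.Halts ↔ Reachable (enc M) M.final) := by
  refine ⟨Enc.enc, fun M => Enc.cntE M false, fun M => Enc.cntE M true, Enc.tokE, ?_, ?_⟩
  · exact Enc.computable_exists
  intro M hWF
  refine ⟨Enc.enc_WF M hWF, Enc.enc_inst M, fun q hq => Enc.machine_mem_states M hq,
    rfl, rfl, fun Q => rfl, ⟨0, 0, Enc.sim_init M hWF 0⟩, ?_, ?_,
    Enc.halts_iff_reachable M hWF⟩
  · intro Qa Qb a b a' b' h t
    exact ⟨t, Enc.sim_step M hWF h t⟩
  · intro Qi a b t c Qj S' Ψ' t₂ hQi hreach hstep hcst hj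
    have hInv := Enc.inv_reach M hWF hQi hreach
      (Enc.Inv.c1 Qi a b Relation.ReflTransGen.refl t)
    obtain ⟨h1, w₁, w₂, h2, h3⟩ := Enc.inv_entry M hWF hQi hInv hstep hcst hj
    exact ⟨h1, w₁, w₂, h2, h3⟩

end MicroStipula
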